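/- arXiv:2603.29639 — 8 statements merged into one kernel-verified Lean document; each statement's English description precedes it below -/
import Mathlib

section
/- With H, π, γ, η as above, the convolution inverse of η is given by η⁻¹(u) = γ(π(u₁)) S(u₂) for all u ∈ H, and moreover γ(π(u)) = η⁻¹(u₁) u₂ for all u ∈ H. -/
open TensorProduct

section Conv

variable {k C A : Type*} [CommSemiring k] [Semiring A] [Algebra k A]
  [AddCommMonoid C] [Module k C] [Coalgebra k C]

/-- Convolution product of linear maps from a coalgebra to an algebra. -/
noncomputable def convP (f g : C →ₗ[k] A) : C →ₗ[k] A :=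
  LinearMap.mul' k A ∘ₗ TensorProduct.map f g ∘ₗ Coalgebra.comul

/-- Convolution unit. -/
noncomputable def convU : C →ₗ[k] A :=
  Algebra.linearMap k A ∘ₗ Coalgebra.counit

lemma convP_apply_repr (f g : C →ₗ[k] A) {u : C} {ι : Type*} (r : Coalgebra.Repr k u ι) :
    convP f g u = ∑ i ∈ r.index, f (r.left i) * g (r.right i) := by
  simp [convP, ← r.eq, map_sum]

lemma convP_assoc (f g h : C →ₗ[k] A) :
    convP (convP f g) h = convP f (convP g h) := by
  ext u
  set r := Coalgebra.Repr.arbitrary k u with hr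
  set a₁ : (i : C × C) → Coalgebra.Repr k (r.left i) (C × C) :=
    fun i => Coalgebra.Repr.arbitrary k (r.left i) with ha₁
  set a₂ : (i : C × C) → Coalgebra.Repr k (r.right i) (C × C) :=
    fun i => Coalgebra.Repr.arbitrary k (r.right i) with ha₂
  have key := Coalgebra.sum_map_tmul_tmul_eq f g h u (repr := r) (a₁ := a₁) (a₂ := a₂)
  apply_fun (LinearMap.mul' k A ∘ₗ (LinearMap.mul' k A).lTensor A) at key
  simp only [map_sum, LinearMap.comp_apply, LinearMap.lTensor_tmul, LinearMap.mul'_apply] at key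
  rw [convP_apply_repr (convP f g) h r, convP_apply_repr f (convP g h) r]
  calc ∑ i ∈ r.index, convP f g (r.left i) * h (r.right i)
      = ∑ i ∈ r.index, ∑ j ∈ (a₁ i).index,
          f ((a₁ i).left j) * (g ((a₁ i).right j) * h (r.right i)) := by
        refine Finset.sum_congr rfl fun i _ => ?_
        rw [convP_apply_repr f g (a₁ i), Finset.sum_mul]
        simp [mul_assoc]
    _ = ∑ i ∈ r.index, ∑ j ∈ (a₂ i).index,
          f (r.left i) * (g ((a₂ i).left j) * h ((a₂ i).right j)) := key.symm
    _ = ∑ i ∈ r.index, f (r.left i) * convP g h (r.right i) := by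
        refine Finset.sum_congr rfl fun i _ => ?_
        rw [convP_apply_repr g h (a₂ i), Finset.mul_sum]

lemma convP_unit_left (f : C →ₗ[k] A) : convP convU f = f := by
  ext u
  set r := Coalgebra.Repr.arbitrary k u with hr
  have key := Coalgebra.sum_counit_tmul_map_eq f u (repr := r)
  apply_fun (TensorProduct.lid k A) at key
  simp only [map_sum, lid_tmul, one_smul] at key
  rw [convP_apply_repr convU f r]
  simp only [convU, LinearMap.comp_apply, Algebra.linearMap_apply]
  calc ∑ i ∈ r.index, algebraMap k A (Coalgebra.counit (r.left i)) * f (r.right i)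
      = ∑ i ∈ r.index, Coalgebra.counit (R := k) (r.left i) • f (r.right i) := by
        refine Finset.sum_congr rfl fun i _ => ?_
        rw [Algebra.smul_def]
    _ = f u := key

lemma convP_unit_right (f : C →ₗ[k] A) : convP f convU = f := by
  ext u
  set r := Coalgebra.Repr.arbitrary k u with hr
  have key := Coalgebra.sum_map_tmul_counit_eq f u (repr := r)
  apply_fun (TensorProduct.rid k A) at key
  simp only [map_sum, rid_tmul, one_smul] at key
  rw [convP_apply_repr f convU r]
  simp only [convU, LinearMap.comp_apply, Algebra.linearMap_apply]
  calc ∑ i ∈ r.index, f (r.left i) * algebraMap k A (Coalgebra.counit (r.right i))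
      = ∑ i ∈ r.index, Coalgebra.counit (R := k) (r.right i) • f (r.left i) := by
        refine Finset.sum_congr rfl fun i _ => ?_
        rw [Algebra.smul_def, Algebra.commutes]
    _ = f u := key

lemma convU_apply (u : C) :
    (convU : C →ₗ[k] A) u = (Coalgebra.counit (R := k) u) • (1 : A) := by
  simp [convU, Algebra.algebraMap_eq_smul_one]

end Conv

/- STATEMENT 2: the convolution inverse of η is ηbar(u) = γ(π(u₁)) S(u₂),
and moreover γ(π(u)) = ηbar(u₁) u₂ for all u ∈ H. -/

theorem stmt2 {k H Q : Type*} [Field k]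
    [Ring H] [HopfAlgebra k H]
    [Ring Q] [HopfAlgebra k Q]
    (π : H →ₐc[k] Q) (hπ : Function.Surjective π)
    (γ γinv : Q →ₗ[k] H)
    (hεγ : ∀ x : Q, Coalgebra.counit (R := k) (γ x) = Coalgebra.counit (R := k) x)
    (hπγ : ∀ x : Q, π (γ x) = x)
    (hcolin : ∀ x : Q,
      (TensorProduct.map γ LinearMap.id) (Coalgebra.comul (R := k) x) =
      (TensorProduct.map LinearMap.id π.toLinearMap) (Coalgebra.comul (R := k) (γ x)))
    (hinv₁ : ∀ x : Q,
      LinearMap.mul' k H ((TensorProduct.map γ γinv) (Coalgebra.comul (R := k) x)) =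
        (Coalgebra.counit (R := k) x) • (1 : H))
    (hinv₂ : ∀ x : Q,
      LinearMap.mul' k H ((TensorProduct.map γinv γ) (Coalgebra.comul (R := k) x)) =
        (Coalgebra.counit (R := k) x) • (1 : H))
    (η : H →ₗ[k] H)
    (hη : η = LinearMap.mul' k H ∘ₗ
      (TensorProduct.map LinearMap.id (γinv ∘ₗ π.toLinearMap)) ∘ₗ Coalgebra.comul)
    -- ηbar(u) := γ(π(u₁)) S(u₂)
    (ηbar : H →ₗ[k] H)
    (hηbar : ηbar = LinearMap.mul' k H ∘ₗ
      (TensorProduct.map (γ ∘ₗ π.toLinearMap) (HopfAlgebra.antipode (R := k))) ∘ₗ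
        Coalgebra.comul) :
    -- ηbar is the convolution inverse of η ...
    (∀ u : H,
      LinearMap.mul' k H ((TensorProduct.map η ηbar) (Coalgebra.comul (R := k) u)) =
        (Coalgebra.counit (R := k) u) • (1 : H)) ∧
    (∀ u : H,
      LinearMap.mul' k H ((TensorProduct.map ηbar η) (Coalgebra.comul (R := k) u)) =
        (Coalgebra.counit (R := k) u) • (1 : H)) ∧
    -- ... and γ(π(u)) = ηbar(u₁) u₂
    (∀ u : H,
      γ (π u) =
        LinearMap.mul' k H
          ((TensorProduct.map ηbar LinearMap.id) (Coalgebra.comul (R := k) u))) := by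
  set S : H →ₗ[k] H := HopfAlgebra.antipode (R := k) with hS
  set f : H →ₗ[k] H := γ ∘ₗ π.toLinearMap with hf
  set g : H →ₗ[k] H := γinv ∘ₗ π.toLinearMap with hg
  have hη' : η = convP LinearMap.id g := hη
  have hηbar' : ηbar = convP f S := hηbar
  -- id ⋆ S = unit
  have hidS : convP (LinearMap.id : H →ₗ[k] H) S = convU := by
    ext u
    have := HopfAlgebra.mul_antipode_lTensor_comul_apply (R := k) (A := H) u
    simpa [convP, convU, LinearMap.lTensor] using this
  -- S ⋆ id = unit
  have hSid : convP S (LinearMap.id : H →ₗ[k] H) = convU := by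
    ext u
    have := HopfAlgebra.mul_antipode_rTensor_comul_apply (R := k) (A := H) u
    simpa [convP, convU, LinearMap.rTensor] using this
  -- f ⋆ g = unit
  have hcomul : ∀ u : H,
      TensorProduct.map π.toLinearMap π.toLinearMap (Coalgebra.comul (R := k) u) =
        Coalgebra.comul (R := k) (π u) :=
    fun u => CoalgHomClass.map_comp_comul_apply π u
  have hcounit : ∀ u : H, Coalgebra.counit (R := k) (π u) = Coalgebra.counit (R := k) u :=
    fun u => CoalgHomClass.counit_comp_apply π u
  have hfg : convP f g = convU := by
    ext u
    have h1 : TensorProduct.map f g (Coalgebra.comul (R := k) u) =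
        TensorProduct.map γ γinv (Coalgebra.comul (R := k) (π u)) := by
      rw [hf, hg, ← hcomul u, TensorProduct.map_comp, LinearMap.comp_apply]
    calc convP f g u = LinearMap.mul' k H (TensorProduct.map f g (Coalgebra.comul (R := k) u)) :=
          rfl
      _ = (Coalgebra.counit (R := k) (π u)) • (1 : H) := by rw [h1, hinv₁]
      _ = convU u := by rw [hcounit u, convU_apply]
  have hgf : convP g f = convU := by
    ext u
    have h1 : TensorProduct.map g f (Coalgebra.comul (R := k) u) =
        TensorProduct.map γinv γ (Coalgebra.comul (R := k) (π u)) := by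
      rw [hf, hg, ← hcomul u, TensorProduct.map_comp, LinearMap.comp_apply]
    calc convP g f u = LinearMap.mul' k H (TensorProduct.map g f (Coalgebra.comul (R := k) u)) :=
          rfl
      _ = (Coalgebra.counit (R := k) (π u)) • (1 : H) := by rw [h1, hinv₂]
      _ = convU u := by rw [hcounit u, convU_apply]
  have main1 : convP η ηbar = convU := by
    rw [hη', hηbar', convP_assoc, ← convP_assoc g f S, hgf, convP_unit_left, hidS]
  have main2 : convP ηbar η = convU := by
    rw [hη', hηbar', convP_assoc, ← convP_assoc S LinearMap.id g, hSid, convP_unit_left, hfg]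
  have main3 : convP ηbar LinearMap.id = f := by
    rw [hηbar', convP_assoc, hSid, convP_unit_right]
  refine ⟨fun u => ?_, fun u => ?_, fun u => ?_⟩
  · have := LinearMap.congr_fun main1 u
    rw [convU_apply] at this
    exact this
  · have := LinearMap.congr_fun main2 u
    rw [convU_apply] at this
    exact this
  · have := LinearMap.congr_fun main3 u
    exact this.symm
end

section
/- Let H be a cocommutative Hopf algebra with surjection π : H → Q and a section γ of π that is both convolution-invertible, counital, colinear, and additionally a coalgebra map. Set η := id ⋆ (γ⁻¹∘π) and define τ̄ : Q → H ⊗ H by τ̄(x) = η⁻¹(γ(x)₁)₁ η(γ(x)₂) ⊗ η⁻¹(γ(x)₁)₂ η(γ(x)₃). Then τ̄ is trivial, i.e. τ̄(x) = ε(x)·(1 ⊗ 1) for all x ∈ Q. -/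
open TensorProduct

/- STATEMENT 4: if H is cocommutative and the section γ is moreover a coalgebra map, then
τ̄(x) = η⁻¹(γ(x)₁)₁ η(γ(x)₂) ⊗ η⁻¹(γ(x)₁)₂ η(γ(x)₃) is trivial: τ̄(x) = ε(x)·(1 ⊗ 1). -/

theorem stmt4 {k H Q : Type*} [Field k]
    [Ring H] [HopfAlgebra k H]
    [Ring Q] [HopfAlgebra k Q]
    -- H is cocommutative
    (hcocomm : ∀ u : H,
      (TensorProduct.comm k H H) (Coalgebra.comul (R := k) u) = Coalgebra.comul (R := k) u)
    (π : H →ₐc[k] Q) (hπ : Function.Surjective π)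
    (γ γinv : Q →ₗ[k] H)
    (hεγ : ∀ x : Q, Coalgebra.counit (R := k) (γ x) = Coalgebra.counit (R := k) x)
    (hπγ : ∀ x : Q, π (γ x) = x)
    (hcolin : ∀ x : Q,
      (TensorProduct.map γ LinearMap.id) (Coalgebra.comul (R := k) x) =
      (TensorProduct.map LinearMap.id π.toLinearMap) (Coalgebra.comul (R := k) (γ x)))
    -- γ is moreover a coalgebra map
    (hγcoalg : ∀ x : Q,
      Coalgebra.comul (R := k) (γ x) = (TensorProduct.map γ γ) (Coalgebra.comul (R := k) x))
    (hinv₁ : ∀ x : Q,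
      LinearMap.mul' k H ((TensorProduct.map γ γinv) (Coalgebra.comul (R := k) x)) =
        (Coalgebra.counit (R := k) x) • (1 : H))
    (hinv₂ : ∀ x : Q,
      LinearMap.mul' k H ((TensorProduct.map γinv γ) (Coalgebra.comul (R := k) x)) =
        (Coalgebra.counit (R := k) x) • (1 : H))
    -- η := id ⋆ (γ⁻¹ ∘ π), with convolution inverse ηinv
    (η ηinv : H →ₗ[k] H)
    (hη : η = LinearMap.mul' k H ∘ₗ
      (TensorProduct.map LinearMap.id (γinv ∘ₗ π.toLinearMap)) ∘ₗ Coalgebra.comul)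
    (hηinv₁ : ∀ u : H,
      LinearMap.mul' k H ((TensorProduct.map η ηinv) (Coalgebra.comul (R := k) u)) =
        (Coalgebra.counit (R := k) u) • (1 : H))
    (hηinv₂ : ∀ u : H,
      LinearMap.mul' k H ((TensorProduct.map ηinv η) (Coalgebra.comul (R := k) u)) =
        (Coalgebra.counit (R := k) u) • (1 : H))
    -- τ̄ : Q → H ⊗ H
    (τbar : Q →ₗ[k] H ⊗[k] H)
    (hτbar : τbar =
      (TensorProduct.map (LinearMap.mul' k H) (LinearMap.mul' k H)) ∘ₗ
      (TensorProduct.tensorTensorTensorComm k H H H H).toLinearMap ∘ₗ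
      (TensorProduct.map (Coalgebra.comul (R := k) ∘ₗ ηinv) (TensorProduct.map η η)) ∘ₗ
      (TensorProduct.map LinearMap.id (Coalgebra.comul (R := k))) ∘ₗ
      (Coalgebra.comul (R := k)) ∘ₗ γ) :
    -- conclusion: τ̄ is trivial
    ∀ x : Q, τbar x = (Coalgebra.counit (R := k) x) • ((1 : H) ⊗ₜ[k] (1 : H)) := by
  intro x
  -- π ∘ γ = id as a linear map
  have hc : π.toLinearMap ∘ₗ γ = LinearMap.id := LinearMap.ext hπγ
  -- η ∘ γ = ε • 1
  have hηγ : ∀ y : Q, η (γ y) = (Coalgebra.counit (R := k) y) • (1 : H) := by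
    intro y
    have key : (TensorProduct.map LinearMap.id (γinv ∘ₗ π.toLinearMap))
        (Coalgebra.comul (R := k) (γ y)) =
        (TensorProduct.map γ γinv) (Coalgebra.comul (R := k) y) := by
      rw [hγcoalg, ← LinearMap.comp_apply, ← TensorProduct.map_comp, LinearMap.id_comp,
        LinearMap.comp_assoc, hc, LinearMap.comp_id]
    rw [hη]
    simp only [LinearMap.comp_apply]
    rw [key, hinv₁]
  -- reconstruction of an element from a representation of its comultiplication
  have hrec : ∀ (z : Q) (r : Coalgebra.Repr k z (Q × Q)),
      z = ∑ i ∈ r.index, Coalgebra.counit (R := k) (r.left i) • r.right i := by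
    intro z r
    have := Coalgebra.sum_counit_tmul_eq r
    apply_fun (TensorProduct.lid k Q) at this
    simp only [map_sum, TensorProduct.lid_tmul, one_smul] at this
    exact this.symm
  -- counit of an element via a representation
  have hcount : ∀ (z : Q) (r : Coalgebra.Repr k z (Q × Q)),
      Coalgebra.counit (R := k) z =
        ∑ i ∈ r.index, Coalgebra.counit (R := k) (r.left i) *
          Coalgebra.counit (R := k) (r.right i) := by
    intro z r
    conv_lhs => rw [hrec z r]
    simp [smul_eq_mul]
  -- ηinv ∘ γ = ε • 1
  have hηinvγ : ∀ y : Q, ηinv (γ y) = (Coalgebra.counit (R := k) y) • (1 : H) := by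
    intro y
    set r := Coalgebra.Repr.arbitrary k y with hr
    calc ηinv (γ y) = ∑ i ∈ r.index,
          Coalgebra.counit (R := k) (r.left i) • ηinv (γ (r.right i)) := by
          conv_lhs => rw [hrec y r]
          simp [map_sum]
      _ = ∑ i ∈ r.index, η (γ (r.left i)) * ηinv (γ (r.right i)) := by
          refine Finset.sum_congr rfl fun i _ => ?_
          rw [hηγ, smul_mul_assoc, one_mul]
      _ = LinearMap.mul' k H ((TensorProduct.map η ηinv)
            (Coalgebra.comul (R := k) (γ y))) := by
          rw [hγcoalg, ← r.eq]
          simp [map_sum]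
      _ = (Coalgebra.counit (R := k) y) • (1 : H) := by rw [hηinv₁, hεγ]
  -- the main computation
  set r := Coalgebra.Repr.arbitrary k x with hrx
  have e1 : Coalgebra.comul (R := k) (γ x) =
      ∑ i ∈ r.index, γ (r.left i) ⊗ₜ[k] γ (r.right i) := by
    rw [hγcoalg, ← r.eq]
    simp [map_sum]
  rw [hτbar]
  simp only [LinearMap.comp_apply, LinearEquiv.coe_coe]
  rw [e1]
  simp only [map_sum, TensorProduct.map_tmul, LinearMap.comp_apply, LinearMap.id_coe, id_eq]
  have step : ∀ i ∈ r.index,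
      (TensorProduct.map (LinearMap.mul' k H) (LinearMap.mul' k H))
        ((TensorProduct.tensorTensorTensorComm k H H H H)
          ((Coalgebra.comul (R := k) (ηinv (γ (r.left i)))) ⊗ₜ[k]
            ((TensorProduct.map η η) (Coalgebra.comul (R := k) (γ (r.right i)))))) =
      (Coalgebra.counit (R := k) (r.left i) * Coalgebra.counit (R := k) (r.right i)) •
        ((1 : H) ⊗ₜ[k] (1 : H)) := by
    intro i _
    have h1 : Coalgebra.comul (R := k) (ηinv (γ (r.left i))) =
        Coalgebra.counit (R := k) (r.left i) • ((1 : H) ⊗ₜ[k] (1 : H)) := by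
      rw [hηinvγ, map_smul, Bialgebra.comul_one, Algebra.TensorProduct.one_def]
    have h2 : (TensorProduct.map η η) (Coalgebra.comul (R := k) (γ (r.right i))) =
        Coalgebra.counit (R := k) (r.right i) • ((1 : H) ⊗ₜ[k] (1 : H)) := by
      set rb := Coalgebra.Repr.arbitrary k (r.right i) with hrb
      rw [hγcoalg, ← rb.eq]
      simp only [map_sum, TensorProduct.map_tmul]
      rw [hcount (r.right i) rb, Finset.sum_smul]
      refine Finset.sum_congr rfl fun j _ => ?_
      rw [hηγ, hηγ]
      simp only [TensorProduct.smul_tmul', TensorProduct.tmul_smul, smul_smul, mul_comm]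
    rw [h1, h2]
    simp only [TensorProduct.smul_tmul', TensorProduct.tmul_smul, map_smul,
      TensorProduct.tensorTensorTensorComm_tmul, TensorProduct.map_tmul,
      LinearMap.mul'_apply, mul_one, smul_smul, mul_comm]
  rw [Finset.sum_congr rfl step, ← Finset.sum_smul, ← hcount x r]
end

section
/- Let H be a Hopf algebra with surjection π : H → Q, convolution-invertible counital colinear section γ, and η := id ⋆ (γ⁻¹∘π). Then for all u, ũ ∈ H: η(uũ) = η(u₁) γ(π(u₂))₁ η(ũ₁) S(γ(π(u₂))₂) η(γ(π(u₂))₃ γ(π(ũ₂))). -/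
open TensorProduct

section Helpers
open Coalgebra

variable {k H : Type*} [Field k] [Ring H] [HopfAlgebra k H]

lemma collapse (σ τ F : H →ₗ[k] H)
    (hστ : ∀ z : H, LinearMap.mul' k H (TensorProduct.map σ τ (comul (R := k) z))
      = counit (R := k) z • (1 : H))
    (y : H) (r : Coalgebra.Repr k y (H × H)) (r2 : ∀ b : (H × H), Coalgebra.Repr k (r.right b) (H × H)) :
    ∑ b ∈ r.index, ∑ c ∈ (r2 b).index,
      σ (r.left b) * (τ ((r2 b).left c) * F ((r2 b).right c)) = F y := by
  classical
  set rl : ∀ b : (H × H), Coalgebra.Repr k (r.left b) (H × H) := fun b => ℛ k (r.left b) with hrl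
  have E := Coalgebra.sum_tmul_tmul_eq r rl r2
  have E' := congrArg (LinearMap.mul' k H ∘ₗ
    TensorProduct.map σ (LinearMap.mul' k H ∘ₗ TensorProduct.map τ F)) E
  simp only [map_sum, LinearMap.comp_apply, TensorProduct.map_tmul,
    LinearMap.mul'_apply] at E'
  rw [← E']
  have key : ∀ b : (H × H), ∑ c ∈ (rl b).index,
      σ ((rl b).left c) * (τ ((rl b).right c) * F (r.right b))
      = (counit (R := k) (r.left b) • (1 : H)) * F (r.right b) := by
    intro b
    rw [← hστ (r.left b), ← (rl b).eq, map_sum, map_sum, Finset.sum_mul]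
    simp [mul_assoc]
  calc ∑ b ∈ r.index, ∑ c ∈ (rl b).index,
        σ ((rl b).left c) * (τ ((rl b).right c) * F (r.right b))
      = ∑ b ∈ r.index, (counit (R := k) (r.left b) • (1 : H)) * F (r.right b) := by
        exact Finset.sum_congr rfl fun b _ => key b
    _ = F y := by
        simp only [smul_mul_assoc, one_mul, ← map_smul]
        rw [← map_sum]
        congr 1
        have := congrArg (TensorProduct.lid k H) (Coalgebra.sum_counit_tmul_eq (R := k) r)
        simpa only [map_sum, TensorProduct.lid_tmul, one_smul] using this

variable {Q : Type*} [Ring Q] [HopfAlgebra k Q]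

lemma hst (π : H →ₐc[k] Q) (γ γinv : Q →ₗ[k] H)
    (hinv₂ : ∀ x : Q,
      LinearMap.mul' k H ((TensorProduct.map γinv γ) (Coalgebra.comul (R := k) x)) =
        (Coalgebra.counit (R := k) x) • (1 : H)) (z : H) :
    LinearMap.mul' k H (TensorProduct.map (γinv ∘ₗ π.toLinearMap) (γ ∘ₗ π.toLinearMap)
      (comul (R := k) z)) = counit (R := k) z • (1 : H) := by
  rw [TensorProduct.map_comp, LinearMap.comp_apply]
  have h1 : TensorProduct.map π.toLinearMap π.toLinearMap (comul (R := k) z)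
      = comul (R := k) (π z) := CoalgHomClass.map_comp_comul_apply π z
  rw [h1, hinv₂, CoalgHomClass.counit_comp_apply]

lemma L3 (π : H →ₐc[k] Q) (γ γinv : Q →ₗ[k] H)
    (hinv₂ : ∀ x : Q,
      LinearMap.mul' k H ((TensorProduct.map γinv γ) (Coalgebra.comul (R := k) x)) =
        (Coalgebra.counit (R := k) x) • (1 : H))
    (η : H →ₗ[k] H)
    (hη : η = LinearMap.mul' k H ∘ₗ
      (TensorProduct.map LinearMap.id (γinv ∘ₗ π.toLinearMap)) ∘ₗ Coalgebra.comul)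
    (F : Q →ₗ[k] H) (h : H) (r : Coalgebra.Repr k h (H × H))
    (a₂ : ∀ i : (H × H), Coalgebra.Repr k (r.right i) (H × H)) :
    ∑ i ∈ r.index, ∑ e ∈ (a₂ i).index,
      η (r.left i) * (γ (π ((a₂ i).left e)) * F (π ((a₂ i).right e)))
    = ∑ i ∈ r.index, r.left i * F (π (r.right i)) := by
  classical
  set rl : ∀ i : (H × H), Coalgebra.Repr k (r.left i) (H × H) := fun i => ℛ k (r.left i) with hrl
  set rr : ∀ (i : (H × H)) (e : (H × H)), Coalgebra.Repr k ((a₂ i).right e) (H × H) :=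
    fun i e => ℛ k ((a₂ i).right e) with hrr
  have E := Coalgebra.sum_tmul_tmul_eq r rl a₂
  have E2 := congrArg (LinearMap.lTensor H (LinearMap.lTensor H
    (Coalgebra.comul (R := k) (A := H)))) E
  have hL : ∀ i : (H × H), Coalgebra.comul (R := k) (r.right i)
      = ∑ e ∈ (a₂ i).index, (a₂ i).left e ⊗ₜ[k] (a₂ i).right e := fun i => ((a₂ i).eq).symm
  have hR : ∀ (i : (H × H)) (e : (H × H)), Coalgebra.comul (R := k) ((a₂ i).right e)
      = ∑ c ∈ (rr i e).index, (rr i e).left c ⊗ₜ[k] (rr i e).right c :=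
    fun i e => ((rr i e).eq).symm
  simp only [map_sum, LinearMap.lTensor_tmul, hL, hR, TensorProduct.tmul_sum] at E2
  set π' := π.toLinearMap with hπ'
  have E3 := congrArg (LinearMap.mul' k H ∘ₗ TensorProduct.map LinearMap.id
    (LinearMap.mul' k H ∘ₗ TensorProduct.map (γinv ∘ₗ π')
      (LinearMap.mul' k H ∘ₗ TensorProduct.map (γ ∘ₗ π') (F ∘ₗ π')))) E2
  simp only [map_sum, LinearMap.comp_apply, TensorProduct.map_tmul,
    LinearMap.mul'_apply, LinearMap.id_apply] at E3
  have hη' : ∀ i : (H × H), η (r.left i)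
      = ∑ m ∈ (rl i).index, (rl i).left m * γinv (π ((rl i).right m)) := by
    intro i
    rw [hη]
    simp only [LinearMap.comp_apply, ← (rl i).eq, map_sum, TensorProduct.map_tmul,
      LinearMap.mul'_apply, LinearMap.id_apply]
    rfl
  calc ∑ i ∈ r.index, ∑ e ∈ (a₂ i).index,
        η (r.left i) * (γ (π ((a₂ i).left e)) * F (π ((a₂ i).right e)))
      = ∑ i ∈ r.index, ∑ m ∈ (rl i).index, ∑ e ∈ (a₂ i).index,
        (rl i).left m * (γinv (π ((rl i).right m)) *
          (γ (π ((a₂ i).left e)) * F (π ((a₂ i).right e)))) := by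
        refine Finset.sum_congr rfl fun i _ => ?_
        rw [Finset.sum_comm]
        refine Finset.sum_congr rfl fun e _ => ?_
        rw [hη' i, Finset.sum_mul]
        simp [mul_assoc]
    _ = ∑ i ∈ r.index, ∑ e ∈ (a₂ i).index, ∑ c ∈ (rr i e).index,
        r.left i * (γinv (π ((a₂ i).left e)) *
          (γ (π ((rr i e).left c)) * F (π ((rr i e).right c)))) := by
        convert E3 using 2
        all_goals rfl
    _ = ∑ i ∈ r.index, r.left i * F (π (r.right i)) := by
        refine Finset.sum_congr rfl fun i _ => ?_
        simp only [← Finset.mul_sum]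
        congr 1
        have := collapse (γinv ∘ₗ π') (γ ∘ₗ π') (F ∘ₗ π')
          (hst π γ γinv hinv₂) (r.right i) (a₂ i) (rr i)
        have hπl' : ∀ z : H, π' z = π z := fun _ => rfl
        simpa only [LinearMap.comp_apply, Finset.mul_sum, BialgHom.coe_toLinearMap, hπl'] using this

/-- Pushforward of a representation along a bialgebra hom. -/
noncomputable def pushRepr (π : H →ₐc[k] Q) {a : H} {ι : Type*} (r : Coalgebra.Repr k a ι) :
    Coalgebra.Repr k (π a) ι where
  index := r.index
  left := fun i => π (r.left i)
  right := fun i => π (r.right i)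
  eq := by
    have h := CoalgHomClass.map_comp_comul_apply π a
    rw [← h, ← r.eq, map_sum]
    simp [TensorProduct.map_tmul]

lemma tmul_mul (p q : H) (T : H ⊗[k] H) :
    (p ⊗ₜ[k] q) * T =
      TensorProduct.map (LinearMap.mulLeft k p) (LinearMap.mulLeft k q) T := by
  induction T using TensorProduct.induction_on with
  | zero => simp
  | tmul s t => simp [Algebra.TensorProduct.tmul_mul_tmul]
  | add x y hx hy => rw [mul_add, hx, hy, map_add]

lemma eta_mul (π : H →ₐc[k] Q) (γ γinv : Q →ₗ[k] H)
    (hcolin : ∀ x : Q,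
      (TensorProduct.map γ LinearMap.id) (Coalgebra.comul (R := k) x) =
      (TensorProduct.map LinearMap.id π.toLinearMap) (Coalgebra.comul (R := k) (γ x)))
    (η : H →ₗ[k] H)
    (hη : η = LinearMap.mul' k H ∘ₗ
      (TensorProduct.map LinearMap.id (γinv ∘ₗ π.toLinearMap)) ∘ₗ Coalgebra.comul)
    (t : H) (x : Q) (rt : Coalgebra.Repr k t (H × H)) (rx : Coalgebra.Repr k x (H × H)) :
    η (t * γ x) = ∑ c ∈ rt.index, ∑ d ∈ rx.index,
      rt.left c * (γ (rx.left d) * γinv (π (rt.right c) * rx.right d)) := by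
  have hπl : ∀ z : H, π.toLinearMap z = π z := fun z => rfl
  rw [hη]
  simp only [LinearMap.comp_apply]
  rw [Bialgebra.comul_mul, ← rt.eq, Finset.sum_mul, map_sum, map_sum]
  refine Finset.sum_congr rfl fun c _ => ?_
  rw [tmul_mul]
  have key : ∀ T : H ⊗[k] H,
      LinearMap.mul' k H ((TensorProduct.map LinearMap.id (γinv ∘ₗ π.toLinearMap))
        ((TensorProduct.map (LinearMap.mulLeft k (rt.left c))
          (LinearMap.mulLeft k (rt.right c))) T)) =
      (LinearMap.mul' k H ∘ₗ TensorProduct.map (LinearMap.mulLeft k (rt.left c))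
        (γinv ∘ₗ LinearMap.mulLeft k (π (rt.right c)))
        ∘ₗ TensorProduct.map LinearMap.id π.toLinearMap) T := by
    intro T
    induction T using TensorProduct.induction_on with
    | zero => simp
    | tmul s w =>
      simp only [TensorProduct.map_tmul, LinearMap.mul'_apply, LinearMap.comp_apply,
        LinearMap.mulLeft_apply, LinearMap.id_apply, hπl, map_mul, mul_assoc]
    | add x y hx hy => simp only [map_add, hx, hy]
  rw [key (Coalgebra.comul (γ x)), LinearMap.comp_apply, LinearMap.comp_apply,
    ← hcolin x, ← rx.eq, map_sum, map_sum, map_sum]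
  refine Finset.sum_congr rfl fun d _ => ?_
  simp only [TensorProduct.map_tmul, LinearMap.mul'_apply, LinearMap.comp_apply,
    LinearMap.mulLeft_apply, LinearMap.id_apply, mul_assoc]


end Helpers

open Coalgebra in
set_option maxHeartbeats 1600000 in
theorem stmt5 {k H Q : Type*} [Field k]
    [Ring H] [HopfAlgebra k H]
    [Ring Q] [HopfAlgebra k Q]
    (π : H →ₐc[k] Q) (hπ : Function.Surjective π)
    (γ γinv : Q →ₗ[k] H)
    (hεγ : ∀ x : Q, Coalgebra.counit (R := k) (γ x) = Coalgebra.counit (R := k) x)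
    (hπγ : ∀ x : Q, π (γ x) = x)
    (hcolin : ∀ x : Q,
      (TensorProduct.map γ LinearMap.id) (Coalgebra.comul (R := k) x) =
      (TensorProduct.map LinearMap.id π.toLinearMap) (Coalgebra.comul (R := k) (γ x)))
    (hinv₁ : ∀ x : Q,
      LinearMap.mul' k H ((TensorProduct.map γ γinv) (Coalgebra.comul (R := k) x)) =
        (Coalgebra.counit (R := k) x) • (1 : H))
    (hinv₂ : ∀ x : Q,
      LinearMap.mul' k H ((TensorProduct.map γinv γ) (Coalgebra.comul (R := k) x)) =
        (Coalgebra.counit (R := k) x) • (1 : H))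
    (η : H →ₗ[k] H)
    (hη : η = LinearMap.mul' k H ∘ₗ
      (TensorProduct.map LinearMap.id (γinv ∘ₗ π.toLinearMap)) ∘ₗ Coalgebra.comul) :
    ∀ u v : H,
      η (u * v) =
        -- η(u₁) · γ(π(u₂))₁ · η(v₁) · S(γ(π(u₂))₂) · η(γ(π(u₂))₃ γ(π(v₂)))
        LinearMap.mul' k H
          ((TensorProduct.map (LinearMap.mul' k H)
              (LinearMap.mul' k H ∘ₗ TensorProduct.map LinearMap.id (LinearMap.mul' k H)))
            ((TensorProduct.tensorTensorTensorComm k H H H (H ⊗[k] H)).toLinearMap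
              ((TensorProduct.map (TensorProduct.map η η)
                  -- (u₂ ⊗ v₂) ↦ γπ(u₂)₁ ⊗ (S(γπ(u₂))₂ ⊗ η(γπ(u₂)₃ · γπ(v₂)))
                  ((TensorProduct.map LinearMap.id
                      (TensorProduct.map (HopfAlgebra.antipode (R := k))
                        (η ∘ₗ LinearMap.mul' k H))) ∘ₗ
                    (TensorProduct.map LinearMap.id
                      (TensorProduct.assoc k H H H).toLinearMap) ∘ₗ
                    (TensorProduct.assoc k H (H ⊗[k] H) H).toLinearMap ∘ₗ
                    (TensorProduct.map
                      ((TensorProduct.map LinearMap.id (Coalgebra.comul (R := k))) ∘ₗ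
                        Coalgebra.comul (R := k) ∘ₗ γ ∘ₗ π.toLinearMap)
                      (γ ∘ₗ π.toLinearMap))))
                ((TensorProduct.tensorTensorTensorComm k H H H H).toLinearMap
                  ((Coalgebra.comul (R := k) u) ⊗ₜ[k] (Coalgebra.comul (R := k) v)))))) := by
  classical
  intro u v
  set ru : Coalgebra.Repr k u (H × H) := ℛ k u with hru
  set rv : Coalgebra.Repr k v (H × H) := ℛ k v with hrv
  set rg : ∀ i : (H × H), Coalgebra.Repr k (γ (π (ru.right i))) (H × H) :=
    fun i => ℛ k (γ (π (ru.right i))) with hrg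
  set rg2 : ∀ (i : (H × H)) (a : (H × H)), Coalgebra.Repr k ((rg i).right a) (H × H) :=
    fun i a => ℛ k ((rg i).right a) with hrg2
  have hgc : ∀ i : (H × H), Coalgebra.comul (R := k) (γ (π (ru.right i)))
      = ∑ a ∈ (rg i).index, (rg i).left a ⊗ₜ[k] (rg i).right a := fun i => ((rg i).eq).symm
  have hgc2 : ∀ (i : (H × H)) (a : (H × H)), Coalgebra.comul (R := k) ((rg i).right a)
      = ∑ b ∈ (rg2 i a).index, (rg2 i a).left b ⊗ₜ[k] (rg2 i a).right b :=
    fun i a => ((rg2 i a).eq).symm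
  have stepA : LinearMap.mul' k H
          ((TensorProduct.map (LinearMap.mul' k H)
              (LinearMap.mul' k H ∘ₗ TensorProduct.map LinearMap.id (LinearMap.mul' k H)))
            ((TensorProduct.tensorTensorTensorComm k H H H (H ⊗[k] H)).toLinearMap
              ((TensorProduct.map (TensorProduct.map η η)
                  ((TensorProduct.map LinearMap.id
                      (TensorProduct.map (HopfAlgebra.antipode (R := k))
                        (η ∘ₗ LinearMap.mul' k H))) ∘ₗ
                    (TensorProduct.map LinearMap.id
                      (TensorProduct.assoc k H H H).toLinearMap) ∘ₗ
                    (TensorProduct.assoc k H (H ⊗[k] H) H).toLinearMap ∘ₗ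
                    (TensorProduct.map
                      ((TensorProduct.map LinearMap.id (Coalgebra.comul (R := k))) ∘ₗ
                        Coalgebra.comul (R := k) ∘ₗ γ ∘ₗ π.toLinearMap)
                      (γ ∘ₗ π.toLinearMap))))
                ((TensorProduct.tensorTensorTensorComm k H H H H).toLinearMap
                  ((Coalgebra.comul (R := k) u) ⊗ₜ[k] (Coalgebra.comul (R := k) v))))))
      = ∑ i ∈ ru.index, ∑ j ∈ rv.index, ∑ a ∈ (rg i).index, ∑ b ∈ (rg2 i a).index,
          η (ru.left i) * ((rg i).left a * (η (rv.left j) *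
            (HopfAlgebra.antipode (R := k) ((rg2 i a).left b) *
              η ((rg2 i a).right b * γ (π (rv.right j)))))) := by
    have hπl : ∀ z : H, π.toLinearMap z = π z := fun _ => rfl
    rw [← ru.eq, ← rv.eq]
    simp only [TensorProduct.sum_tmul, TensorProduct.tmul_sum, map_sum,
      TensorProduct.tensorTensorTensorComm_tmul, LinearMap.comp_apply,
      TensorProduct.map_tmul, LinearMap.id_apply, LinearEquiv.coe_coe,
      LinearMap.mul'_apply, TensorProduct.assoc_tmul, hπl, hgc, hgc2]
    rw [Finset.sum_comm]
    simp only [mul_assoc]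
  rw [stepA]
  set rg3 : ∀ (i : (H × H)) (a : (H × H)) (b : (H × H)),
      Coalgebra.Repr k ((rg2 i a).right b) (H × H) := fun i a b => ℛ k ((rg2 i a).right b) with hrg3
  set ruR : ∀ i : (H × H), Coalgebra.Repr k (ru.right i) (H × H) := fun i => ℛ k (ru.right i) with hruR
  set rvR : ∀ j : (H × H), Coalgebra.Repr k (rv.right j) (H × H) := fun j => ℛ k (rv.right j) with hrvR
  set rx : ∀ j : (H × H), Coalgebra.Repr k (π (rv.right j)) (H × H) := fun j => pushRepr π (rvR j) with hrx
  have hS : ∀ z : H, LinearMap.mul' k H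
      (TensorProduct.map (HopfAlgebra.antipode (R := k)) LinearMap.id
        (Coalgebra.comul (R := k) z)) = Coalgebra.counit (R := k) z • (1 : H) := by
    intro z
    have h := HopfAlgebra.mul_antipode_rTensor_comul_apply (R := k) (a := z)
    rw [LinearMap.rTensor] at h
    rw [h, Algebra.algebraMap_eq_smul_one]
  have stepB : ∀ (i : (H × H)) (j : (H × H)) (a : (H × H)),
      ∑ b ∈ (rg2 i a).index,
        η (ru.left i) * ((rg i).left a * (η (rv.left j) *
          (HopfAlgebra.antipode (R := k) ((rg2 i a).left b) *
            η ((rg2 i a).right b * γ (π (rv.right j))))))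
      = ∑ d ∈ (rvR j).index,
        η (ru.left i) * ((rg i).left a * (η (rv.left j) *
          (γ (π ((rvR j).left d)) *
            γinv (π ((rg i).right a) * π ((rvR j).right d))))) := by
    intro i j a
    have heta : ∀ b : (H × H),
        η ((rg2 i a).right b * γ (π (rv.right j)))
        = ∑ c ∈ (rg3 i a b).index, ∑ d ∈ (rvR j).index,
          (rg3 i a b).left c * (γ (π ((rvR j).left d)) *
            γinv (π ((rg3 i a b).right c) * π ((rvR j).right d))) := by
      intro b
      exact eta_mul π γ γinv hcolin η hη _ _ (rg3 i a b) (rx j)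
    have hcol : ∀ d : (H × H),
        ∑ b ∈ (rg2 i a).index, ∑ c ∈ (rg3 i a b).index,
          HopfAlgebra.antipode (R := k) ((rg2 i a).left b) *
            ((rg3 i a b).left c * (γ (π ((rvR j).left d)) *
              γinv (π ((rg3 i a b).right c) * π ((rvR j).right d))))
        = γ (π ((rvR j).left d)) *
            γinv (π ((rg i).right a) * π ((rvR j).right d)) := by
      intro d
      have := collapse (HopfAlgebra.antipode (R := k)) LinearMap.id
        (LinearMap.mulLeft k (γ (π ((rvR j).left d))) ∘ₗ γinv ∘ₗ
          LinearMap.mulRight k (π ((rvR j).right d)) ∘ₗ π.toLinearMap)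
        (fun z => hS z) ((rg i).right a) (rg2 i a) (rg3 i a)
      have hπl' : ∀ z : H, π.toLinearMap z = π z := fun _ => rfl
      simpa only [LinearMap.comp_apply, LinearMap.mulLeft_apply,
        LinearMap.mulRight_apply, LinearMap.id_coe, id_eq, BialgHom.coe_toLinearMap, hπl'] using this
    calc ∑ b ∈ (rg2 i a).index,
          η (ru.left i) * ((rg i).left a * (η (rv.left j) *
            (HopfAlgebra.antipode (R := k) ((rg2 i a).left b) *
              η ((rg2 i a).right b * γ (π (rv.right j))))))
        = η (ru.left i) * ((rg i).left a * (η (rv.left j) *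
            ∑ d ∈ (rvR j).index, ∑ b ∈ (rg2 i a).index, ∑ c ∈ (rg3 i a b).index,
              HopfAlgebra.antipode (R := k) ((rg2 i a).left b) *
                ((rg3 i a b).left c * (γ (π ((rvR j).left d)) *
                  γinv (π ((rg3 i a b).right c) * π ((rvR j).right d)))))) := by
          rw [Finset.sum_comm]
          simp only [heta, Finset.mul_sum]
          exact Finset.sum_congr rfl fun b _ => Finset.sum_comm
      _ = ∑ d ∈ (rvR j).index,
          η (ru.left i) * ((rg i).left a * (η (rv.left j) *
            (γ (π ((rvR j).left d)) *
              γinv (π ((rg i).right a) * π ((rvR j).right d))))) := by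
          simp only [hcol, Finset.mul_sum]
  have hπl : ∀ z : H, π.toLinearMap z = π z := fun _ => rfl
  have stepC : ∀ (i : (H × H)) (j : (H × H)) (d : (H × H)),
      ∑ a ∈ (rg i).index,
        η (ru.left i) * ((rg i).left a * (η (rv.left j) *
          (γ (π ((rvR j).left d)) *
            γinv (π ((rg i).right a) * π ((rvR j).right d)))))
      = ∑ e ∈ (ruR i).index,
        η (ru.left i) * (γ (π ((ruR i).left e)) * (η (rv.left j) *
          (γ (π ((rvR j).left d)) *
            γinv (π ((ruR i).right e) * π ((rvR j).right d))))) := by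
    intro i j d
    have key := hcolin (π (ru.right i))
    rw [hgc i, ← CoalgHomClass.map_comp_comul_apply π (ru.right i), ← (ruR i).eq] at key
    simp only [map_sum, TensorProduct.map_tmul, LinearMap.id_apply, hπl] at key
    have E := congrArg (LinearMap.mulLeft k (η (ru.left i)) ∘ₗ LinearMap.mul' k H ∘ₗ
      TensorProduct.map LinearMap.id
        (LinearMap.mulLeft k (η (rv.left j)) ∘ₗ
          LinearMap.mulLeft k (γ (π ((rvR j).left d))) ∘ₗ γinv ∘ₗ
          LinearMap.mulRight k (π ((rvR j).right d)))) key
    simp only [map_sum, LinearMap.comp_apply, TensorProduct.map_tmul,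
      LinearMap.mul'_apply, LinearMap.id_apply, LinearMap.mulLeft_apply,
      LinearMap.mulRight_apply] at E
    exact E.symm
  have stepD : ∀ (j : (H × H)) (d : (H × H)),
      ∑ i ∈ ru.index, ∑ e ∈ (ruR i).index,
        η (ru.left i) * (γ (π ((ruR i).left e)) * (η (rv.left j) *
          (γ (π ((rvR j).left d)) *
            γinv (π ((ruR i).right e) * π ((rvR j).right d)))))
      = ∑ i ∈ ru.index, ru.left i * (η (rv.left j) *
          (γ (π ((rvR j).left d)) *
            γinv (π (ru.right i) * π ((rvR j).right d)))) := by
    intro j d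
    have := L3 π γ γinv hinv₂ η hη
      (LinearMap.mulLeft k (η (rv.left j)) ∘ₗ
        LinearMap.mulLeft k (γ (π ((rvR j).left d))) ∘ₗ γinv ∘ₗ
        LinearMap.mulRight k (π ((rvR j).right d))) u ru ruR
    simpa only [LinearMap.comp_apply, LinearMap.mulLeft_apply,
      LinearMap.mulRight_apply] using this
  have stepE : ∀ i : (H × H),
      ∑ j ∈ rv.index, ∑ d ∈ (rvR j).index,
        η (rv.left j) * (γ (π ((rvR j).left d)) *
          γinv (π (ru.right i) * π ((rvR j).right d)))
      = ∑ j ∈ rv.index, rv.left j * γinv (π (ru.right i) * π (rv.right j)) := by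
    intro i
    have := L3 π γ γinv hinv₂ η hη
      (γinv ∘ₗ LinearMap.mulLeft k (π (ru.right i))) v rv rvR
    simpa only [LinearMap.comp_apply, LinearMap.mulLeft_apply] using this
  calc η (u * v)
      = ∑ i ∈ ru.index, ∑ j ∈ rv.index,
          ru.left i * (rv.left j * γinv (π (ru.right i) * π (rv.right j))) := by
        rw [hη]
        simp only [LinearMap.comp_apply]
        rw [Bialgebra.comul_mul, ← ru.eq, ← rv.eq, Finset.sum_mul_sum]
        simp only [Algebra.TensorProduct.tmul_mul_tmul, map_sum,
          TensorProduct.map_tmul, LinearMap.mul'_apply, LinearMap.id_apply,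
          LinearMap.comp_apply, hπl, map_mul, mul_assoc]
    _ = ∑ i ∈ ru.index, ∑ j ∈ rv.index, ∑ a ∈ (rg i).index, ∑ b ∈ (rg2 i a).index,
          η (ru.left i) * ((rg i).left a * (η (rv.left j) *
            (HopfAlgebra.antipode (R := k) ((rg2 i a).left b) *
              η ((rg2 i a).right b * γ (π (rv.right j)))))) := by
        have h1 : ∑ i ∈ ru.index, ∑ j ∈ rv.index, ∑ a ∈ (rg i).index,
              ∑ b ∈ (rg2 i a).index,
              η (ru.left i) * ((rg i).left a * (η (rv.left j) *
                (HopfAlgebra.antipode (R := k) ((rg2 i a).left b) *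
                  η ((rg2 i a).right b * γ (π (rv.right j))))))
            = ∑ i ∈ ru.index, ∑ j ∈ rv.index, ∑ d ∈ (rvR j).index,
              ∑ a ∈ (rg i).index,
              η (ru.left i) * ((rg i).left a * (η (rv.left j) *
                (γ (π ((rvR j).left d)) *
                  γinv (π ((rg i).right a) * π ((rvR j).right d))))) := by
          refine Finset.sum_congr rfl fun i _ => Finset.sum_congr rfl fun j _ => ?_
          rw [← Finset.sum_comm]
          exact Finset.sum_congr rfl fun a _ => stepB i j a
        have h2 : ∑ i ∈ ru.index, ∑ j ∈ rv.index, ∑ d ∈ (rvR j).index,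
              ∑ a ∈ (rg i).index,
              η (ru.left i) * ((rg i).left a * (η (rv.left j) *
                (γ (π ((rvR j).left d)) *
                  γinv (π ((rg i).right a) * π ((rvR j).right d)))))
            = ∑ i ∈ ru.index, ∑ j ∈ rv.index, ∑ d ∈ (rvR j).index,
              ∑ e ∈ (ruR i).index,
              η (ru.left i) * (γ (π ((ruR i).left e)) * (η (rv.left j) *
                (γ (π ((rvR j).left d)) *
                  γinv (π ((ruR i).right e) * π ((rvR j).right d))))) := by
          exact Finset.sum_congr rfl fun i _ => Finset.sum_congr rfl fun j _ =>
            Finset.sum_congr rfl fun d _ => stepC i j d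
        have h3 : ∑ i ∈ ru.index, ∑ j ∈ rv.index, ∑ d ∈ (rvR j).index,
              ∑ e ∈ (ruR i).index,
              η (ru.left i) * (γ (π ((ruR i).left e)) * (η (rv.left j) *
                (γ (π ((rvR j).left d)) *
                  γinv (π ((ruR i).right e) * π ((rvR j).right d)))))
            = ∑ j ∈ rv.index, ∑ d ∈ (rvR j).index, ∑ i ∈ ru.index,
              ∑ e ∈ (ruR i).index,
              η (ru.left i) * (γ (π ((ruR i).left e)) * (η (rv.left j) *
                (γ (π ((rvR j).left d)) *
                  γinv (π ((ruR i).right e) * π ((rvR j).right d))))) := by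
          rw [Finset.sum_comm]
          exact Finset.sum_congr rfl fun j _ => Finset.sum_comm
        rw [h1, h2, h3]
        calc ∑ i ∈ ru.index, ∑ j ∈ rv.index,
              ru.left i * (rv.left j * γinv (π (ru.right i) * π (rv.right j)))
            = ∑ i ∈ ru.index, ∑ j ∈ rv.index, ∑ d ∈ (rvR j).index,
              ru.left i * (η (rv.left j) * (γ (π ((rvR j).left d)) *
                γinv (π (ru.right i) * π ((rvR j).right d)))) := by
              refine Finset.sum_congr rfl fun i _ => ?_
              rw [← Finset.mul_sum, ← stepE i]
              simp only [Finset.mul_sum]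
          _ = ∑ j ∈ rv.index, ∑ d ∈ (rvR j).index, ∑ i ∈ ru.index,
              ru.left i * (η (rv.left j) * (γ (π ((rvR j).left d)) *
                γinv (π (ru.right i) * π ((rvR j).right d)))) := by
              rw [Finset.sum_comm]
              exact Finset.sum_congr rfl fun j _ => Finset.sum_comm
          _ = ∑ j ∈ rv.index, ∑ d ∈ (rvR j).index, ∑ i ∈ ru.index,
              ∑ e ∈ (ruR i).index,
              η (ru.left i) * (γ (π ((ruR i).left e)) * (η (rv.left j) *
                (γ (π ((rvR j).left d)) *
                  γinv (π ((ruR i).right e) * π ((rvR j).right d))))) :=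
              Finset.sum_congr rfl fun j _ => Finset.sum_congr rfl fun d _ =>
                (stepD j d).symm
end

section
/- For a field k of characteristic p > 0 and r ≥ 1, the map F_r : k[X_0,…,X_{r−1}]/(X_0^p,…,X_{r−1}^p) → k[G_{a,r}] sending X_i ↦ δ_{p^i} is an algebra isomorphism, with inverse sending δ_n ↦ (1/(a_0!⋯a_{r−1}!)) X_0^{a_0}⋯X_{r−1}^{a_{r−1}} where n = a_0 + a_1 p + ⋯ + a_{r−1} p^{r−1} is the p-adic expansion of n. -/
open TensorProduct

private lemma stmt9_lucas1 {p : ℕ} (hp : p.Prime) :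
    ∀ (j i : ℕ), (i * p ^ j).choose (p ^ j) ≡ i [MOD p] := by
  haveI := Fact.mk hp
  intro j
  induction j with
  | zero => intro i; simpa using Nat.ModEq.refl i
  | succ j ih =>
    intro i
    have h := Choose.choose_modEq_choose_mod_mul_choose_div_nat (p := p)
      (n := i * p ^ (j+1)) (k := p ^ (j+1))
    have h1 : i * p ^ (j+1) % p = 0 := by
      rw [pow_succ, ← mul_assoc]; exact Nat.mul_mod_left _ _
    have h2 : p ^ (j+1) % p = 0 := by
      rw [pow_succ]; exact Nat.mul_mod_left _ _
    have h3 : i * p ^ (j+1) / p = i * p ^ j := by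
      rw [pow_succ, ← mul_assoc]; exact Nat.mul_div_cancel _ hp.pos
    have h4 : p ^ (j+1) / p = p ^ j := by
      rw [pow_succ]; exact Nat.mul_div_cancel _ hp.pos
    rw [h1, h2, h3, h4] at h
    simpa using h.trans ((ih i).mul_left _)

private lemma stmt9_lucas2 {p : ℕ} (hp : p.Prime) :
    ∀ (s m c : ℕ), m < p ^ s → (m + c * p ^ s).choose m ≡ 1 [MOD p] := by
  haveI := Fact.mk hp
  intro s
  induction s with
  | zero =>
    intro m c hm
    have hm0 : m = 0 := by simpa using hm
    subst hm0
    simpa using Nat.ModEq.refl 1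
  | succ s ih =>
    intro m c hm
    have h := Choose.choose_modEq_choose_mod_mul_choose_div_nat (p := p)
      (n := m + c * p ^ (s+1)) (k := m)
    have h1 : (m + c * p ^ (s+1)) % p = m % p := by
      rw [pow_succ, ← mul_assoc]; exact Nat.add_mul_mod_self_right m _ p
    have h3 : (m + c * p ^ (s+1)) / p = m / p + c * p ^ s := by
      rw [pow_succ, ← mul_assoc]; exact Nat.add_mul_div_right m _ hp.pos
    have hdiv : m / p < p ^ s := by
      rw [Nat.div_lt_iff_lt_mul hp.pos, ← pow_succ]; exact hm
    rw [h1, h3, Nat.choose_self] at h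
    simpa using h.trans ((Nat.ModEq.refl 1).mul (ih (m / p) c hdiv))

private lemma stmt9_digit_sum {p : ℕ} (hp : 0 < p) :
    ∀ (r n : ℕ), n < p ^ r → ∑ j ∈ Finset.range r, n / p ^ j % p * p ^ j = n := by
  intro r
  induction r with
  | zero =>
    intro n hn
    simp only [pow_zero] at hn
    simp only [Finset.range_zero, Finset.sum_empty]
    omega
  | succ r ih =>
    intro n hn
    have hdiv : n / p < p ^ r := by
      rw [Nat.div_lt_iff_lt_mul hp, ← pow_succ]; exact hn
    rw [Finset.sum_range_succ']
    have e : ∀ j : ℕ, n / p ^ (j+1) % p * p ^ (j+1) = n / p / p ^ j % p * p ^ j * p := by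
      intro j
      rw [pow_succ', ← Nat.div_div_eq_div_mul]
      ring
    calc (∑ j ∈ Finset.range r, n / p ^ (j+1) % p * p ^ (j+1)) + n / p ^ 0 % p * p ^ 0
        = (∑ j ∈ Finset.range r, n / p / p ^ j % p * p ^ j) * p + n % p := by
          rw [Finset.sum_mul]
          congr 1
          · exact Finset.sum_congr rfl fun j _ => e j
          · simp
      _ = n / p * p + n % p := by rw [ih _ hdiv]
      _ = n := Nat.div_add_mod' n p

private lemma stmt9_sum_shift {p : ℕ} (r : ℕ) (a : ℕ → ℕ) :
    ∑ j ∈ Finset.range (r+1), a j * p ^ j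
      = a 0 + (∑ j ∈ Finset.range r, a (j+1) * p ^ j) * p := by
  rw [Finset.sum_range_succ', Finset.sum_mul, add_comm]
  congr 1
  · simp
  · exact Finset.sum_congr rfl fun j _ => by rw [pow_succ]; ring

private lemma stmt9_digit_bound {p : ℕ} (hp : 2 ≤ p) :
    ∀ (r : ℕ) (a : ℕ → ℕ), (∀ j, j < r → a j < p) →
      ∑ j ∈ Finset.range r, a j * p ^ j < p ^ r := by
  intro r
  induction r with
  | zero => intro a _; simp
  | succ r ih =>
    intro a ha
    rw [stmt9_sum_shift]
    have hS : (∑ j ∈ Finset.range r, a (j+1) * p ^ j) < p ^ r := by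
      simpa using ih (fun j => a (j+1)) (fun j hj => ha (j+1) (by omega))
    have ha0 := ha 0 (by omega)
    calc a 0 + (∑ j ∈ Finset.range r, a (j+1) * p ^ j) * p
        < p + (∑ j ∈ Finset.range r, a (j+1) * p ^ j) * p := by omega
      _ = ((∑ j ∈ Finset.range r, a (j+1) * p ^ j) + 1) * p := by ring
      _ ≤ p ^ r * p := Nat.mul_le_mul_right p (by omega)
      _ = p ^ (r+1) := (pow_succ p r).symm

private lemma stmt9_digit_extract {p : ℕ} (hp : 2 ≤ p) :
    ∀ (r : ℕ) (a : ℕ → ℕ), (∀ j, j < r → a j < p) → ∀ i, i < r →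
      (∑ j ∈ Finset.range r, a j * p ^ j) / p ^ i % p = a i := by
  intro r
  induction r with
  | zero => intro a _ i hi; omega
  | succ r ih =>
    intro a ha i hi
    have hp0 : 0 < p := by omega
    rw [stmt9_sum_shift]
    rcases Nat.eq_zero_or_pos i with rfl | hi0
    · simp only [pow_zero, Nat.div_one]
      rw [Nat.add_mul_mod_self_right, Nat.mod_eq_of_lt (ha 0 (by omega))]
    · obtain ⟨i', rfl⟩ : ∃ i', i = i' + 1 := ⟨i - 1, by omega⟩
      rw [pow_succ', ← Nat.div_div_eq_div_mul]
      have hq : (a 0 + (∑ j ∈ Finset.range r, a (j+1) * p ^ j) * p) / p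
          = ∑ j ∈ Finset.range r, a (j+1) * p ^ j := by
        rw [Nat.add_mul_div_right _ _ hp0, Nat.div_eq_of_lt (ha 0 (by omega)), zero_add]
      rw [hq]
      exact ih (fun j => a (j+1)) (fun j hj => ha (j+1) (by omega)) i' (by omega)

theorem stmt9 {k : Type*} [Field k] {p : ℕ} (hp : p.Prime) [CharP k p] (r : ℕ) (hr : 1 ≤ r)
    -- D = k[G_{a,r}], presented by structure constants on the basis {δ_n}
    {D : Type*} [CommRing D] [Algebra k D]
    (δ : ℕ → D)
    (hmul : ∀ m n : ℕ, δ m * δ n = (((m + n).choose m : ℕ) : k) • δ (m + n))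
    (hzero : ∀ n, p ^ r ≤ n → δ n = 0)
    (hone : (1 : D) = δ 0)
    (bD : Module.Basis (Fin (p ^ r)) k D) (hbD : ∀ i : Fin (p ^ r), bD i = δ (i : ℕ)) :
    ∃ F : (MvPolynomial (Fin r) k ⧸
            Ideal.span (Set.range fun i : Fin r => (MvPolynomial.X i : MvPolynomial (Fin r) k) ^ p))
          ≃ₐ[k] D,
      (∀ i : Fin r,
        F (Ideal.Quotient.mk _ (MvPolynomial.X i)) = δ (p ^ (i : ℕ))) ∧
      (∀ n : ℕ, n < p ^ r →
        F.symm (δ n) =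
          Ideal.Quotient.mk _
            (MvPolynomial.C ((∏ j : Fin r, ((n / p ^ (j : ℕ) % p).factorial : k))⁻¹) *
              ∏ j : Fin r, (MvPolynomial.X j : MvPolynomial (Fin r) k) ^ (n / p ^ (j : ℕ) % p))) := by
  classical
  haveI := Fact.mk hp
  have hp0 : 0 < p := hp.pos
  have hp2 : 2 ≤ p := hp.two_le
  set I : Ideal (MvPolynomial (Fin r) k) :=
    Ideal.span (Set.range fun i : Fin r => (MvPolynomial.X i : MvPolynomial (Fin r) k) ^ p)
    with hI
  have hcast : ∀ a b : ℕ, a ≡ b [MOD p] → ((a : k) = (b : k)) := by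
    intro a b h
    have h1 : ((a : ZMod p) = (b : ZMod p)) := (ZMod.natCast_eq_natCast_iff a b p).mpr h
    have h2 := congrArg (ZMod.castHom (dvd_refl p) k) h1
    simpa using h2
  -- the power formula δ(p^j)^a = a! • δ(a p^j)
  have hpow : ∀ j a : ℕ, δ (p ^ j) ^ a = ((a.factorial : k)) • δ (a * p ^ j) := by
    intro j a
    induction a with
    | zero => simpa using hone
    | succ a ih =>
      rw [pow_succ, ih, smul_mul_assoc, hmul, smul_smul]
      have h1 : a * p ^ j + p ^ j = (a+1) * p ^ j := by ring
      rw [h1]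
      congr 1
      have hsymm : ((a+1) * p ^ j).choose (a * p ^ j) = ((a+1) * p ^ j).choose (p ^ j) := by
        have h2 : a * p ^ j = (a+1) * p ^ j - p ^ j := by
          rw [add_mul, one_mul, Nat.add_sub_cancel]
        rw [h2, Nat.choose_symm (by nlinarith [pow_pos hp0 j])]
      rw [hsymm, ← Nat.cast_mul]
      refine hcast _ _ ?_
      calc a.factorial * ((a+1) * p ^ j).choose (p ^ j)
          ≡ a.factorial * (a+1) [MOD p] := (stmt9_lucas1 hp j (a+1)).mul_left _
        _ = (a+1).factorial := by rw [Nat.factorial_succ]; ring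
  have hpzero : ∀ j : ℕ, δ (p ^ j) ^ p = 0 := by
    intro j
    rw [hpow]
    have h0 : (p.factorial : k) = 0 := by
      rw [CharP.cast_eq_zero_iff k p]
      exact Nat.dvd_factorial hp0 le_rfl
    rw [h0, zero_smul]
  -- the product formula
  have hprod : ∀ (s : ℕ) (a : ℕ → ℕ), (∀ j, j < s → a j < p) →
      ∏ j ∈ Finset.range s, δ (p ^ j) ^ a j
        = (∏ j ∈ Finset.range s, ((a j).factorial : k)) •
            δ (∑ j ∈ Finset.range s, a j * p ^ j) := by
    intro s
    induction s with
    | zero => intro a _; simpa using hone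
    | succ s ih =>
      intro a ha
      rw [Finset.prod_range_succ, ih a (fun j hj => ha j (by omega)), hpow,
        smul_mul_assoc, mul_smul_comm, hmul, smul_smul, smul_smul,
        Finset.sum_range_succ, Finset.prod_range_succ]
      congr 1
      have h1 : ((∑ j ∈ Finset.range s, a j * p ^ j) + a s * p ^ s).choose
          (∑ j ∈ Finset.range s, a j * p ^ j) ≡ 1 [MOD p] :=
        stmt9_lucas2 hp s _ (a s) (stmt9_digit_bound hp2 s a (fun j hj => ha j (by omega)))
      have h2 : ((((∑ j ∈ Finset.range s, a j * p ^ j) + a s * p ^ s).choose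
          (∑ j ∈ Finset.range s, a j * p ^ j) : ℕ) : k) = 1 := by
        have := hcast _ 1 h1; simpa using this
      rw [h2]
      ring
  -- the algebra morphism
  let g : Fin r → D := fun i => δ (p ^ (i : ℕ))
  let φ : MvPolynomial (Fin r) k →ₐ[k] D := MvPolynomial.aeval g
  have hφX : ∀ i : Fin r, φ (MvPolynomial.X i) = δ (p ^ (i : ℕ)) := fun i =>
    MvPolynomial.aeval_X g i
  have hkerφ : ∀ x ∈ I, φ x = 0 := by
    intro x hx
    have hle : I ≤ RingHom.ker φ.toRingHom := by
      rw [hI, Ideal.span_le]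
      rintro _ ⟨i, rfl⟩
      simp only [SetLike.mem_coe, RingHom.mem_ker]
      show φ (MvPolynomial.X i ^ p) = 0
      rw [map_pow, hφX]
      exact hpzero _
    exact RingHom.mem_ker.mp (hle hx)
  let F₀ : (MvPolynomial (Fin r) k ⧸ I) →ₐ[k] D := Ideal.Quotient.liftₐ I φ hkerφ
  have hF₀ : ∀ x : MvPolynomial (Fin r) k, F₀ (Ideal.Quotient.mk I x) = φ x := by
    intro x
    rw [Ideal.Quotient.liftₐ_apply]
    exact Ideal.Quotient.lift_mk _ _ _
  -- evaluation on a product of powers of X with small exponents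
  have key : ∀ a : Fin r → ℕ, (∀ j, a j < p) →
      φ (∏ j : Fin r, MvPolynomial.X j ^ a j)
        = (∏ j : Fin r, ((a j).factorial : k)) • δ (∑ j : Fin r, a j * p ^ (j : ℕ)) := by
    intro a ha
    have hφ : φ (∏ j : Fin r, MvPolynomial.X j ^ a j)
        = ∏ j : Fin r, δ (p ^ (j : ℕ)) ^ a j := by
      rw [map_prod]
      exact Finset.prod_congr rfl fun j _ => by rw [map_pow, hφX]
    set a' : ℕ → ℕ := fun m => if h : m < r then a ⟨m, h⟩ else 0 with ha'
    have ha'' : ∀ j : Fin r, a' (j : ℕ) = a j := fun j => dif_pos j.isLt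
    have ha''' : ∀ j, j < r → a' j < p := by
      intro j hj
      rw [ha']
      simp only [dif_pos hj]
      exact ha _
    have e1 : ∏ j : Fin r, δ (p ^ (j : ℕ)) ^ a j
        = ∏ j ∈ Finset.range r, δ (p ^ j) ^ a' j := by
      rw [← Fin.prod_univ_eq_prod_range (fun m => δ (p ^ m) ^ a' m) r]
      exact Finset.prod_congr rfl fun j _ => by rw [ha'']
    have e2 : ∏ j : Fin r, ((a j).factorial : k)
        = ∏ j ∈ Finset.range r, ((a' j).factorial : k) := by
      rw [← Fin.prod_univ_eq_prod_range (fun m => (((a' m).factorial : k))) r]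
      exact Finset.prod_congr rfl fun j _ => by rw [ha'']
    have e3 : ∑ j : Fin r, a j * p ^ (j : ℕ) = ∑ j ∈ Finset.range r, a' j * p ^ j := by
      rw [← Fin.sum_univ_eq_sum_range (fun m => a' m * p ^ m) r]
      exact Finset.sum_congr rfl fun j _ => by rw [ha'']
    rw [hφ, e1, e2, e3, hprod r a' ha''']
  have hfacne : ∀ a : Fin r → ℕ, (∀ j, a j < p) →
      (∏ j : Fin r, ((a j).factorial : k)) ≠ 0 := by
    intro a ha
    refine Finset.prod_ne_zero_iff.mpr fun j _ => fun h0 => ?_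
    rw [CharP.cast_eq_zero_iff k p] at h0
    have := (Nat.Prime.dvd_factorial hp).mp h0
    have := ha j
    omega
  have hφC : ∀ c : k, φ (MvPolynomial.C c) = algebraMap k D c := fun c =>
    MvPolynomial.aeval_C g c
  -- the candidate inverse
  let G : D →ₗ[k] (MvPolynomial (Fin r) k ⧸ I) := bD.constr k fun i =>
    Ideal.Quotient.mk I
      (MvPolynomial.C ((∏ j : Fin r, (((i : ℕ) / p ^ (j : ℕ) % p).factorial : k))⁻¹) *
        ∏ j : Fin r, MvPolynomial.X j ^ ((i : ℕ) / p ^ (j : ℕ) % p))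
  have hGδ : ∀ (n : ℕ) (hn : n < p ^ r), G (δ n) =
      Ideal.Quotient.mk I
        (MvPolynomial.C ((∏ j : Fin r, ((n / p ^ (j : ℕ) % p).factorial : k))⁻¹) *
          ∏ j : Fin r, (MvPolynomial.X j : MvPolynomial (Fin r) k) ^ (n / p ^ (j : ℕ) % p)) := by
    intro n hn
    rw [show δ n = bD ⟨n, hn⟩ from (hbD ⟨n, hn⟩).symm]
    exact bD.constr_basis k _ ⟨n, hn⟩
  -- G ∘ F₀ = id
  have hGF : ∀ x : MvPolynomial (Fin r) k,
      G (F₀ (Ideal.Quotient.mk I x)) = Ideal.Quotient.mk I x := by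
    have heq : (G ∘ₗ (F₀.toLinearMap ∘ₗ (Ideal.Quotient.mkₐ k I).toLinearMap))
        = (Ideal.Quotient.mkₐ k I).toLinearMap := by
      refine (MvPolynomial.basisMonomials (Fin r) k).ext fun s => ?_
      rw [MvPolynomial.coe_basisMonomials]
      simp only [LinearMap.coe_comp, Function.comp_apply, AlgHom.toLinearMap_apply,
        Ideal.Quotient.mkₐ_eq_mk]
      by_cases hcase : ∀ j, s j < p
      · have hmon : (MvPolynomial.monomial s (1 : k))
            = ∏ j : Fin r, MvPolynomial.X j ^ s j := by
          rw [MvPolynomial.monomial_eq, map_one, one_mul]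
          exact Finsupp.prod_fintype s _ fun i => pow_zero _
        set n : ℕ := ∑ j : Fin r, s j * p ^ (j : ℕ) with hn
        set s' : ℕ → ℕ := fun m => if h : m < r then s ⟨m, h⟩ else 0 with hs'
        have hs'' : ∀ j : Fin r, s' (j : ℕ) = s j := fun j => dif_pos j.isLt
        have hs''' : ∀ j, j < r → s' j < p := by
          intro j hj; rw [hs']; simp only [dif_pos hj]; exact hcase _
        have hnr : n = ∑ j ∈ Finset.range r, s' j * p ^ j := by
          rw [hn, ← Fin.sum_univ_eq_sum_range (fun m => s' m * p ^ m) r]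
          exact Finset.sum_congr rfl fun j _ => by rw [hs'']
        have hnlt : n < p ^ r := by
          rw [hnr]; exact stmt9_digit_bound hp2 r s' hs'''
        have hdig : ∀ j : Fin r, n / p ^ (j : ℕ) % p = s j := by
          intro j
          rw [hnr, stmt9_digit_extract hp2 r s' hs''' (j : ℕ) j.isLt, hs'']
        rw [hmon, hF₀, key s hcase, ← hn, map_smul, hGδ n hnlt]
        have hc1 : (∏ j : Fin r, ((n / p ^ (j : ℕ) % p).factorial : k))
            = ∏ j : Fin r, ((s j).factorial : k) :=
          Finset.prod_congr rfl fun j _ => by rw [hdig j]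
        have hc2 : (∏ j : Fin r, (MvPolynomial.X j : MvPolynomial (Fin r) k)
              ^ (n / p ^ (j : ℕ) % p))
            = ∏ j : Fin r, MvPolynomial.X j ^ s j :=
          Finset.prod_congr rfl fun j _ => by rw [hdig j]
        rw [hc1, hc2, ← Ideal.Quotient.mkₐ_eq_mk k I, ← map_smul,
          MvPolynomial.smul_eq_C_mul, ← mul_assoc, ← map_mul,
          mul_inv_cancel₀ (hfacne (fun j => s j) hcase), map_one, one_mul]
      · push_neg at hcase
        obtain ⟨j, hj⟩ := hcase
        have hsle : Finsupp.single j p ≤ s := Finsupp.single_le_iff.mpr hj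
        have hdvd : (MvPolynomial.monomial s (1 : k))
            = MvPolynomial.X j ^ p * MvPolynomial.monomial (s - Finsupp.single j p) 1 := by
          rw [MvPolynomial.X_pow_eq_monomial, MvPolynomial.monomial_mul, one_mul,
            add_tsub_cancel_of_le hsle]
        have hmem : (MvPolynomial.monomial s (1 : k)) ∈ I := by
          rw [hdvd]
          exact Ideal.mul_mem_right _ _ (Ideal.subset_span ⟨j, rfl⟩)
        rw [Ideal.Quotient.eq_zero_iff_mem.mpr hmem]
        simp
    intro x
    have := LinearMap.congr_fun heq x
    simpa [Ideal.Quotient.mkₐ_eq_mk] using this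
  -- F₀ ∘ G = id on the basis
  have hFG : ∀ i : Fin (p ^ r), F₀ (G (bD i)) = bD i := by
    intro i
    have hdlt : ∀ j : Fin r, (i : ℕ) / p ^ (j : ℕ) % p < p := fun j => Nat.mod_lt _ hp0
    have hsum : ∑ j : Fin r, (i : ℕ) / p ^ (j : ℕ) % p * p ^ (j : ℕ) = (i : ℕ) := by
      rw [Fin.sum_univ_eq_sum_range (fun m => (i : ℕ) / p ^ m % p * p ^ m) r]
      exact stmt9_digit_sum hp0 r (i : ℕ) i.isLt
    have hkey := key (fun j => (i : ℕ) / p ^ (j : ℕ) % p) hdlt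
    rw [hbD i, hGδ (i : ℕ) i.isLt, hF₀, map_mul, hφC, hkey, hsum,
      ← Algebra.smul_def, smul_smul,
      inv_mul_cancel₀ (hfacne (fun j => (i : ℕ) / p ^ (j : ℕ) % p) hdlt), one_smul]
  have hGF' : ∀ q, G (F₀ q) = q := by
    intro q
    obtain ⟨x, rfl⟩ := Ideal.Quotient.mk_surjective q
    exact hGF x
  have hinj : Function.Injective F₀ := fun x y h => by rw [← hGF' x, h, hGF' y]
  have hsurj : Function.Surjective F₀ := by
    have hFGlin : F₀.toLinearMap ∘ₗ G = LinearMap.id := bD.ext fun i => by simpa using hFG i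
    exact fun d => ⟨G d, by simpa using LinearMap.congr_fun hFGlin d⟩
  refine ⟨AlgEquiv.ofBijective F₀ ⟨hinj, hsurj⟩, ?_, ?_⟩
  · intro i
    show F₀ (Ideal.Quotient.mk I (MvPolynomial.X i)) = δ (p ^ (i : ℕ))
    rw [hF₀, hφX]
  · intro n hn
    have h1 : (AlgEquiv.ofBijective F₀ ⟨hinj, hsurj⟩) (G (δ n)) = δ n := by
      show F₀ (G (δ n)) = δ n
      rw [show δ n = bD ⟨n, hn⟩ from (hbD ⟨n, hn⟩).symm]
      exact hFG _
    rw [← h1, AlgEquiv.symm_apply_apply, hGδ n hn]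
end

section
/- Let k have characteristic p > 0 and consider k[G_{a,2}] = (k[t]/(t^{p²}))* with basis {δ_n : 0 ≤ n < p²}. The linear map π : k[G_{a,2}] → k[G_{a,1}] given by π(δ_n) = δ_{n/p} if p | n and π(δ_n) = 0 otherwise is a surjective algebra map whose kernel equals k[G_{a,1}]⁺ k[G_{a,2}] = span{δ_n : p ∤ n}, where k[G_{a,1}] ⊂ k[G_{a,2}] is the span of {δ_0,…,δ_{p−1}} and k[G_{a,1}]⁺ = span{δ_1,…,δ_{p−1}}. -/
open TensorProduct

/- STATEMENT 11: π : k[G_{a,2}] → k[G_{a,1}], δ_n ↦ δ_{n/p} if p | n and 0 otherwise,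
is a surjective algebra map whose kernel equals k[G_{a,1}]⁺ k[G_{a,2}] = span{δ_n : p ∤ n}. -/

lemma castchoose {k : Type*} [Field k] {p : ℕ} (hp : p.Prime) [CharP k p] (n m : ℕ) :
    ((n.choose m : ℕ) : k) =
      (((n % p).choose (m % p) : ℕ) : k) * (((n / p).choose (m / p) : ℕ) : k) := by
  haveI : Fact p.Prime := ⟨hp⟩
  rw [← Nat.cast_mul]
  exact CharP.natCast_eq_natCast' k p Choose.choose_modEq_choose_mod_mul_choose_div_nat

theorem stmt11 {k : Type*} [Field k] {p : ℕ} (hp : p.Prime) [CharP k p]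
    -- A = k[G_{a,2}], presented by structure constants on the basis {δ_n : n < p²}
    {A : Type*} [CommRing A] [Algebra k A]
    (δ : ℕ → A)
    (hmul : ∀ m n : ℕ, δ m * δ n = (((m + n).choose m : ℕ) : k) • δ (m + n))
    (hzero : ∀ n, p ^ 2 ≤ n → δ n = 0)
    (hone : (1 : A) = δ 0)
    (bA : Module.Basis (Fin (p ^ 2)) k A) (hbA : ∀ i : Fin (p ^ 2), bA i = δ (i : ℕ))
    -- A1 = k[G_{a,1}]
    {A1 : Type*} [CommRing A1] [Algebra k A1]
    (δ' : ℕ → A1)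
    (hmul' : ∀ m n : ℕ, δ' m * δ' n = (((m + n).choose m : ℕ) : k) • δ' (m + n))
    (hzero' : ∀ n, p ≤ n → δ' n = 0)
    (hone' : (1 : A1) = δ' 0)
    (bA1 : Module.Basis (Fin p) k A1) (hbA1 : ∀ i : Fin p, bA1 i = δ' (i : ℕ))
    -- π
    (π : A →ₗ[k] A1)
    (hπ : ∀ n, n < p ^ 2 → π (δ n) = if p ∣ n then δ' (n / p) else 0) :
    Function.Surjective π ∧
    (∀ x y : A, π (x * y) = π x * π y) ∧
    LinearMap.ker π =
      Submodule.span k {x : A | ∃ n, n < p ^ 2 ∧ ¬ p ∣ n ∧ x = δ n} ∧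
    Submodule.span k {x : A | ∃ n, n < p ^ 2 ∧ ¬ p ∣ n ∧ x = δ n} =
      Submodule.span k {y : A | ∃ i, 0 < i ∧ i < p ∧ ∃ x : A, y = δ i * x} := by
  haveI : Fact p.Prime := ⟨hp⟩
  have hp0 : 0 < p := hp.pos
  have hpp : p ^ 2 = p * p := sq p
  set S : Set A := {x : A | ∃ n, n < p ^ 2 ∧ ¬ p ∣ n ∧ x = δ n} with hS
  -- Lucas coefficient lemmas
  have hc0 : ∀ m n : ℕ, p ∣ (m + n) → ¬ p ∣ m → (((m + n).choose m : ℕ) : k) = 0 := by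
    intro m n hd hm
    have h1 : (m + n) % p = 0 := Nat.dvd_iff_mod_eq_zero.mp hd
    have h2 : 0 < m % p := Nat.pos_of_ne_zero fun h => hm (Nat.dvd_iff_mod_eq_zero.mpr h)
    rw [castchoose hp, h1, Nat.choose_eq_zero_of_lt h2, Nat.cast_zero, zero_mul]
  have hc1 : ∀ m n : ℕ, p ∣ m → p ∣ n →
      (((m + n).choose m : ℕ) : k) = ((((m + n) / p).choose (m / p) : ℕ) : k) := by
    intro m n hm hn
    have h1 : (m + n) % p = 0 := Nat.dvd_iff_mod_eq_zero.mp (dvd_add hm hn)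
    have h2 : m % p = 0 := Nat.dvd_iff_mod_eq_zero.mp hm
    rw [castchoose hp, h1, h2, Nat.choose_self, Nat.cast_one, one_mul]
  -- multiplicativity on basis elements
  have hmulδ : ∀ m n : ℕ, m < p ^ 2 → n < p ^ 2 → π (δ m * δ n) = π (δ m) * π (δ n) := by
    intro m n hm2 hn2
    rw [hmul, map_smul]
    by_cases hmn : p ^ 2 ≤ m + n
    · rw [hzero _ hmn, map_zero, smul_zero]
      by_cases hm : p ∣ m
      · by_cases hn : p ∣ n
        · obtain ⟨a, rfl⟩ := hm
          obtain ⟨b, rfl⟩ := hn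
          rw [hπ _ hm2, hπ _ hn2, if_pos ⟨a, rfl⟩, if_pos ⟨b, rfl⟩,
            Nat.mul_div_cancel_left a hp0, Nat.mul_div_cancel_left b hp0, hmul',
            hzero' (a + b) (by nlinarith), smul_zero]
        · rw [hπ n hn2, if_neg hn, mul_zero]
      · rw [hπ m hm2, if_neg hm, zero_mul]
    · push_neg at hmn
      rw [hπ (m + n) hmn]
      by_cases hs : p ∣ (m + n)
      · rw [if_pos hs]
        by_cases hm : p ∣ m
        · have hn : p ∣ n := (Nat.dvd_add_right hm).mp hs
          rw [hπ m hm2, hπ n hn2, if_pos hm, if_pos hn, hmul',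
            ← Nat.add_div_of_dvd_right hm, hc1 m n hm hn]
        · rw [hc0 m n hs hm, zero_smul, hπ m hm2, if_neg hm, zero_mul]
      · rw [if_neg hs, smul_zero]
        by_cases hm : p ∣ m
        · have hn : ¬ p ∣ n := fun hn => hs (dvd_add hm hn)
          rw [hπ n hn2, if_neg hn, mul_zero]
        · rw [hπ m hm2, if_neg hm, zero_mul]
  -- full multiplicativity
  have hmulxy : ∀ x y : A, π (x * y) = π x * π y := by
    have h2 : (LinearMap.mul k A).compr₂ π = (LinearMap.mul k A1).compl₁₂ π π := by
      apply bA.ext; intro i; apply bA.ext; intro j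
      simp only [LinearMap.compr₂_apply, LinearMap.compl₁₂_apply, LinearMap.mul_apply', hbA]
      exact hmulδ _ _ i.isLt j.isLt
    intro x y
    have := LinearMap.congr_fun (LinearMap.congr_fun h2 x) y
    simpa using this
  -- the embedding j ↦ j * p
  have hjp : ∀ j : Fin p, (j : ℕ) * p < p ^ 2 := by
    intro j; rw [hpp]; exact (Nat.mul_lt_mul_right hp0).mpr j.isLt
  set e : Fin p → Fin (p ^ 2) := fun j => ⟨(j : ℕ) * p, hjp j⟩ with he
  have heinj : Function.Injective e := by
    intro a b hab
    have : (a : ℕ) * p = (b : ℕ) * p := congrArg Fin.val hab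
    exact Fin.ext (Nat.eq_of_mul_eq_mul_right hp0 this)
  have hπe : ∀ j : Fin p, π (bA (e j)) = bA1 j := by
    intro j
    rw [hbA, hbA1, hπ _ (hjp j), if_pos ⟨j, mul_comm _ _⟩, Nat.mul_div_left _ hp0]
  -- surjectivity
  have hsurj : Function.Surjective π := by
    rw [← LinearMap.range_eq_top, ← top_le_iff, ← bA1.span_eq, Submodule.span_le]
    rintro _ ⟨j, rfl⟩
    exact ⟨bA (e j), hπe j⟩
  refine ⟨hsurj, hmulxy, ?_, ?_⟩
  · -- kernel
    apply le_antisymm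
    · intro x hx
      have hx0 : π x = 0 := hx
      set c : Fin p → k := fun j => bA.repr x (e j) with hc
      have hπx : π x = ∑ j : Fin p, c j • bA1 j := by
        have hvan : ∀ i ∈ (Finset.univ : Finset (Fin (p ^ 2))), i ∉ Finset.univ.image e →
            bA.repr x i • π (bA i) = 0 := by
          intro i _ hi
          have hnd : ¬ p ∣ (i : ℕ) := by
            intro hd
            apply hi
            refine Finset.mem_image.mpr ⟨⟨(i : ℕ) / p, ?_⟩, Finset.mem_univ _, ?_⟩
            · rw [Nat.div_lt_iff_lt_mul hp0, ← hpp]; exact i.isLt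
            · exact Fin.ext (Nat.div_mul_cancel hd)
          rw [hbA, hπ _ i.isLt, if_neg hnd, smul_zero]
        conv_lhs => rw [← bA.sum_repr x]
        rw [map_sum]
        simp only [map_smul]
        calc ∑ i : Fin (p ^ 2), bA.repr x i • π (bA i)
            = ∑ i ∈ Finset.univ.image e, bA.repr x i • π (bA i) :=
              (Finset.sum_subset (Finset.subset_univ _) hvan).symm
          _ = ∑ j : Fin p, bA.repr x (e j) • π (bA (e j)) :=
              Finset.sum_image (fun a _ b _ h => heinj h)
          _ = ∑ j : Fin p, c j • bA1 j := Finset.sum_congr rfl (fun j _ => by rw [hπe])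
      have hczero : ∀ j, c j = 0 := by
        have := Fintype.linearIndependent_iff.mp bA1.linearIndependent c
        apply this
        rw [← hπx, hx0]
      rw [← bA.sum_repr x]
      apply Submodule.sum_mem
      intro i _
      by_cases hd : p ∣ (i : ℕ)
      · have hilt : (i : ℕ) / p < p := by
          rw [Nat.div_lt_iff_lt_mul hp0, ← hpp]; exact i.isLt
        have : bA.repr x i = 0 := by
          have : e ⟨(i : ℕ) / p, hilt⟩ = i := Fin.ext (Nat.div_mul_cancel hd)
          rw [← this]; exact hczero _
        rw [this, zero_smul]; exact Submodule.zero_mem _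
      · exact Submodule.smul_mem _ _
          (Submodule.subset_span ⟨(i : ℕ), i.isLt, hd, (hbA i)⟩)
    · rw [Submodule.span_le]
      rintro _ ⟨n, hn, hnd, rfl⟩
      simp only [SetLike.mem_coe, LinearMap.mem_ker, hπ n hn, if_neg hnd]
  · -- span equality
    apply le_antisymm
    · rw [Submodule.span_le]
      rintro _ ⟨n, hn, hnd, rfl⟩
      apply Submodule.subset_span
      have h2 : 0 < n % p := Nat.pos_of_ne_zero fun h => hnd (Nat.dvd_iff_mod_eq_zero.mpr h)
      refine ⟨n % p, h2, Nat.mod_lt n hp0, δ (p * (n / p)), ?_⟩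
      have hmn := hmul (n % p) (p * (n / p))
      rw [Nat.mod_add_div] at hmn
      have hC : ((n.choose (n % p) : ℕ) : k) = 1 := by
        rw [castchoose hp, Nat.mod_mod_of_dvd n (dvd_refl p)]
        rw [Nat.choose_self, Nat.cast_one, one_mul,
          Nat.div_eq_of_lt (Nat.mod_lt n hp0), Nat.choose_zero_right, Nat.cast_one]
      rw [hmn, hC, one_smul]
    · rw [Submodule.span_le]
      rintro _ ⟨i, hi0, hip, x, rfl⟩
      have hnd : ¬ p ∣ i := Nat.not_dvd_of_pos_of_lt hi0 hip
      have key : ∀ j : Fin (p ^ 2), δ i * bA j ∈ Submodule.span k S := by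
        intro j
        rw [hbA, hmul]
        by_cases h2 : p ^ 2 ≤ i + (j : ℕ)
        · rw [hzero _ h2, smul_zero]; exact Submodule.zero_mem _
        · by_cases hd : p ∣ (i + (j : ℕ))
          · rw [hc0 i j hd hnd, zero_smul]; exact Submodule.zero_mem _
          · exact Submodule.smul_mem _ _
              (Submodule.subset_span ⟨i + (j : ℕ), Nat.lt_of_not_le h2, hd, rfl⟩)
      have hx : x ∈ Submodule.span k (Set.range bA) := by rw [bA.span_eq]; trivial
      refine Submodule.span_induction ?_ ?_ ?_ ?_ hx
      · rintro _ ⟨j, rfl⟩; exact key j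
      · rw [mul_zero]; exact Submodule.zero_mem _
      · intro a b _ _ ha hb; rw [mul_add]; exact Submodule.add_mem _ ha hb
      · intro r a _ ha; rw [mul_smul_comm]; exact Submodule.smul_mem _ _ ha
end

section
/- With π and γ as above for G = G_{a,2}, H = G_{a,1}, the map η := id ⋆ (γ⁻¹∘π) : k[G_{a,2}] → k[G_{a,2}] is the projection onto span{δ_0,…,δ_{p−1}} along span{δ_p,…,δ_{p²−1}}; that is, η(δ_n) = δ_n for 0 ≤ n < p and η(δ_n) = 0 for p ≤ n < p². -/
open TensorProduct

lemma lucas_cast {k : Type*} [Field k] {p : ℕ} (hp : p.Prime) [CharP k p]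
    (n i : ℕ) : ((n.choose (p * i) : ℕ) : k) = (((n / p).choose i : ℕ) : k) := by
  haveI : Fact p.Prime := ⟨hp⟩
  have h := Choose.choose_modEq_choose_mod_mul_choose_div_nat (p := p) (n := n) (k := p * i)
  rw [Nat.mul_mod_right, Nat.choose_zero_right, Nat.mul_div_cancel_left _ hp.pos, one_mul] at h
  exact CharP.natCast_eq_natCast' k p h

/- STATEMENT 13: η := id ⋆ (γ⁻¹∘π), i.e. η(δ_n) = Σ_{a+b=n} δ_a γ⁻¹(π(δ_b)), is the
projection of k[G_{a,2}] onto span{δ_0,…,δ_{p−1}}: η(δ_n) = δ_n for n < p and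
η(δ_n) = 0 for p ≤ n < p². -/

theorem stmt13 {k : Type*} [Field k] {p : ℕ} (hp : p.Prime) [CharP k p]
    -- A = k[G_{a,2}]
    {A : Type*} [CommRing A] [Algebra k A]
    (δ : ℕ → A)
    (hmul : ∀ m n : ℕ, δ m * δ n = (((m + n).choose m : ℕ) : k) • δ (m + n))
    (hzero : ∀ n, p ^ 2 ≤ n → δ n = 0)
    (hone : (1 : A) = δ 0)
    (bA : Module.Basis (Fin (p ^ 2)) k A) (hbA : ∀ i : Fin (p ^ 2), bA i = δ (i : ℕ))
    -- A1 = k[G_{a,1}]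
    {A1 : Type*} [CommRing A1] [Algebra k A1]
    (δ' : ℕ → A1)
    (hmul' : ∀ m n : ℕ, δ' m * δ' n = (((m + n).choose m : ℕ) : k) • δ' (m + n))
    (hzero' : ∀ n, p ≤ n → δ' n = 0)
    (hone' : (1 : A1) = δ' 0)
    (bA1 : Module.Basis (Fin p) k A1) (hbA1 : ∀ i : Fin p, bA1 i = δ' (i : ℕ))
    -- π, γ⁻¹
    (π : A →ₗ[k] A1)
    (hπ : ∀ n, n < p ^ 2 → π (δ n) = if p ∣ n then δ' (n / p) else 0)
    (γinv : A1 →ₗ[k] A)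
    (hγinv : ∀ n, n < p → γinv (δ' n) = ((-1 : k) ^ n) • δ (p * n)) :
    -- η(δ_n) = Σ_{a+b=n} δ_a · γ⁻¹(π(δ_b)) equals δ_n for n < p, and 0 for p ≤ n < p²
    ∀ n, n < p ^ 2 →
      (∑ ab ∈ Finset.HasAntidiagonal.antidiagonal n, δ ab.1 * γinv (π (δ ab.2))) =
        if n < p then δ n else 0 := by
  intro n hn
  set c : ℕ → k := fun b => if p ∣ b then (-1 : k) ^ (b / p) * (n.choose b : ℕ) else 0 with hc
  -- Step 1: each term equals c ab.2 • δ n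
  have step1 : ∀ ab ∈ Finset.HasAntidiagonal.antidiagonal n,
      δ ab.1 * γinv (π (δ ab.2)) = c ab.2 • δ n := by
    rintro ⟨a, b⟩ hab
    rw [Finset.HasAntidiagonal.mem_antidiagonal] at hab
    have hbn : b ≤ n := hab ▸ Nat.le_add_left b a
    have hb2 : b < p ^ 2 := lt_of_le_of_lt hbn hn
    rw [hπ b hb2]
    by_cases hd : p ∣ b
    · have hbp : b / p < p := by
        rw [Nat.div_lt_iff_lt_mul hp.pos, ← sq]; exact hb2
      rw [if_pos hd, hγinv _ hbp]
      simp only [hc, hd, if_pos]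
      rw [Nat.mul_div_cancel' hd, mul_smul_comm, hmul, hab, smul_smul]
      congr 1
      have ha : a = n - b := by omega
      rw [ha, Nat.choose_symm hbn]
    · rw [if_neg hd, map_zero, mul_zero]
      simp only [hc, hd, if_false, zero_smul]
  rw [Finset.sum_congr rfl step1, ← Finset.sum_smul]
  -- Step 2: reindex the scalar sum over antidiagonal to range
  have swap : (∑ ab ∈ Finset.HasAntidiagonal.antidiagonal n, c ab.2) = ∑ b ∈ Finset.range (n + 1), c b := by
    have h1 := Finset.Nat.sum_antidiagonal_swap (n := n) (f := fun ab => c ab.1)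
    simp only [Prod.fst_swap] at h1
    rw [h1, Finset.Nat.sum_antidiagonal_eq_sum_range_succ (fun a _ => c a)]
  rw [swap]
  -- Step 3: restrict to multiples of p and reindex by i = b / p
  have step3 : (∑ b ∈ Finset.range (n + 1), c b) =
      ∑ i ∈ Finset.range (n / p + 1), (-1 : k) ^ i * (n.choose (p * i) : ℕ) := by
    rw [hc, Finset.sum_ite, Finset.sum_const_zero, add_zero]
    apply Finset.sum_nbij' (i := fun b => b / p) (j := fun i => p * i)
    · intro b hb
      simp only [Finset.mem_filter, Finset.mem_range] at hb ⊢
      exact Nat.lt_succ_of_le (Nat.div_le_div_right (by omega))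
    · intro i hi
      simp only [Finset.mem_filter, Finset.mem_range] at hi ⊢
      refine ⟨by nlinarith [Nat.div_mul_le_self n p, hp.pos], Dvd.intro i rfl⟩
    · intro b hb
      simp only [Finset.mem_filter] at hb
      exact Nat.mul_div_cancel' hb.2
    · intro i _
      exact Nat.mul_div_cancel_left _ hp.pos
    · intro b hb
      simp only [Finset.mem_filter] at hb
      rw [Nat.mul_div_cancel' hb.2]
  rw [step3]
  -- Step 4: Lucas + alternating sum
  have step4 : (∑ i ∈ Finset.range (n / p + 1), (-1 : k) ^ i * (n.choose (p * i) : ℕ)) =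
      if n / p = 0 then 1 else 0 := by
    have : ∀ i, ((n.choose (p * i) : ℕ) : k) = (((n / p).choose i : ℕ) : k) :=
      lucas_cast hp n
    simp_rw [this]
    have h := Int.alternating_sum_range_choose (n := n / p)
    have := congrArg (fun z : ℤ => (z : k)) h
    push_cast at this
    rw [← this]
  rw [step4]
  by_cases hnp : n < p
  · rw [if_pos hnp, if_pos (Nat.div_eq_of_lt hnp), one_smul]
  · rw [if_neg hnp]
    have : n / p ≠ 0 := by
      intro h
      have h1 := Nat.div_add_mod n p
      have h2 := Nat.mod_lt n hp.pos
      rw [h, Nat.mul_zero, Nat.zero_add] at h1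
      omega
    rw [if_neg this, zero_smul]
end

section
/- Define τ̄ : k[G_{a,1}] → k[G_{a,1}] ⊗ k[G_{a,1}] by τ̄(δ_n) = η⁻¹(γ(δ_n)₁)₁ η(γ(δ_n)₂) ⊗ η⁻¹(γ(δ_n)₁)₂ η(γ(δ_n)₃), computed inside k[G_{a,2}] with γ, η, η⁻¹ as above. Then τ̄(δ_0) = δ_0 ⊗ δ_0, τ̄(δ_1) = Σ_{j=1}^{p−1} δ_j ⊗ δ_{p−j}, and τ̄(δ_n) = 0 for 2 ≤ n < p. -/
open TensorProduct

/- STATEMENT 15: τ̄(δ_n) = η⁻¹(γ(δ_n)₁)₁ η(γ(δ_n)₂) ⊗ η⁻¹(γ(δ_n)₁)₂ η(γ(δ_n)₃), computed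
inside k[G_{a,2}] with γ(δ_n) = δ_{pn}, η(δ_m) = [m<p] δ_m, η⁻¹(δ_m) = [m<p] (−1)^m δ_m:
τ̄(δ_0) = δ_0 ⊗ δ_0, τ̄(δ_1) = Σ_{j=1}^{p−1} δ_j ⊗ δ_{p−j}, and τ̄(δ_n) = 0 for 2 ≤ n < p. -/


open Finset in
private lemma regroup {M : Type*} [AddCommMonoid M] (N : ℕ) (F : ℕ → ℕ → ℕ → ℕ → M) :
    (∑ am ∈ Finset.HasAntidiagonal.antidiagonal N, ∑ bc ∈ Finset.HasAntidiagonal.antidiagonal am.2,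
      ∑ rs ∈ Finset.HasAntidiagonal.antidiagonal am.1, F rs.1 rs.2 bc.1 bc.2)
    = ∑ ij ∈ Finset.HasAntidiagonal.antidiagonal N, ∑ r ∈ Finset.range (ij.1 + 1),
        ∑ s ∈ Finset.range (ij.2 + 1), F r s (ij.1 - r) (ij.2 - s) := by
  have L : (∑ am ∈ Finset.HasAntidiagonal.antidiagonal N, ∑ bc ∈ Finset.HasAntidiagonal.antidiagonal am.2,
      ∑ rs ∈ Finset.HasAntidiagonal.antidiagonal am.1, F rs.1 rs.2 bc.1 bc.2)
      = ∑ x ∈ (Finset.HasAntidiagonal.antidiagonal N).sigma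
          (fun am => Finset.HasAntidiagonal.antidiagonal am.2 ×ˢ Finset.HasAntidiagonal.antidiagonal am.1),
          F x.2.2.1 x.2.2.2 x.2.1.1 x.2.1.2 := by
    rw [Finset.sum_sigma]
    exact Finset.sum_congr rfl fun am _ =>
      (Finset.sum_product' _ _ (fun (bc rs : ℕ × ℕ) => F rs.1 rs.2 bc.1 bc.2)).symm
  have R : (∑ ij ∈ Finset.HasAntidiagonal.antidiagonal N, ∑ r ∈ Finset.range (ij.1 + 1),
        ∑ s ∈ Finset.range (ij.2 + 1), F r s (ij.1 - r) (ij.2 - s))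
      = ∑ y ∈ (Finset.HasAntidiagonal.antidiagonal N).sigma
          (fun ij => Finset.range (ij.1 + 1) ×ˢ Finset.range (ij.2 + 1)),
          F y.2.1 y.2.2 (y.1.1 - y.2.1) (y.1.2 - y.2.2) := by
    rw [Finset.sum_sigma]
    exact Finset.sum_congr rfl fun ij _ =>
      (Finset.sum_product' _ _ (fun r s => F r s (ij.1 - r) (ij.2 - s))).symm
  rw [L, R]
  refine Finset.sum_nbij'
    (fun x => ⟨(x.2.2.1 + x.2.1.1, x.2.2.2 + x.2.1.2), (x.2.2.1, x.2.2.2)⟩)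
    (fun y => ⟨(y.2.1 + y.2.2, (y.1.1 - y.2.1) + (y.1.2 - y.2.2)),
      ((y.1.1 - y.2.1, y.1.2 - y.2.2), (y.2.1, y.2.2))⟩) ?_ ?_ ?_ ?_ ?_
  · rintro ⟨⟨a, m⟩, ⟨⟨b, c⟩, ⟨r, s⟩⟩⟩ hx
    simp only [Finset.mem_sigma, Finset.mem_product, Finset.HasAntidiagonal.mem_antidiagonal,
      Finset.mem_range] at hx ⊢
    omega
  · rintro ⟨⟨i, j⟩, ⟨r, s⟩⟩ hy
    simp only [Finset.mem_sigma, Finset.mem_product, Finset.HasAntidiagonal.mem_antidiagonal,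
      Finset.mem_range] at hy ⊢
    refine ⟨by omega, trivial, trivial⟩
  · rintro ⟨⟨a, m⟩, ⟨⟨b, c⟩, ⟨r, s⟩⟩⟩ hx
    simp only [Finset.mem_sigma, Finset.mem_product, Finset.HasAntidiagonal.mem_antidiagonal,
      Finset.mem_range] at hx
    obtain ⟨hx1, hx2, hx3⟩ := hx
    subst hx2 hx3
    simp [Nat.add_sub_cancel_left]
  · rintro ⟨⟨i, j⟩, ⟨r, s⟩⟩ hy
    simp only [Finset.mem_sigma, Finset.mem_product, Finset.HasAntidiagonal.mem_antidiagonal,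
      Finset.mem_range] at hy
    have e1 : r + (i - r) = i := by omega
    have e2 : s + (j - s) = j := by omega
    simp [e1, e2]
  · rintro ⟨⟨a, m⟩, ⟨⟨b, c⟩, ⟨r, s⟩⟩⟩ hx
    simp only [Finset.mem_sigma, Finset.mem_product, Finset.HasAntidiagonal.mem_antidiagonal,
      Finset.mem_range] at hx
    have h1 : r + b - r = b := by omega
    have h2 : s + c - s = c := by omega
    simp [h1, h2]

private def cfdef (k : Type*) [Field k] (p r s b c : ℕ) : k :=
  (if r + s < p then (-1 : k) ^ (r + s) else 0) *
    ((if b < p then (((r + b).choose r : ℕ) : k) else 0) *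
     (if c < p then (((s + c).choose s : ℕ) : k) else 0))

private lemma altsum {k : Type*} [Field k] {i : ℕ} (hi : i ≠ 0) :
    ∑ r ∈ Finset.range (i + 1), ((-1 : k) ^ r * (i.choose r : k)) = 0 := by
  have h := Int.alternating_sum_range_choose_of_ne hi
  have h2 := congrArg (Int.cast : ℤ → k) h
  push_cast at h2
  exact h2

theorem stmt15 {k : Type*} [Field k] {p : ℕ} (hp : p.Prime) [CharP k p]
    -- A = k[G_{a,2}]
    {A : Type*} [CommRing A] [Algebra k A]
    (δ : ℕ → A)
    (hmul : ∀ m n : ℕ, δ m * δ n = (((m + n).choose m : ℕ) : k) • δ (m + n))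
    (hzero : ∀ n, p ^ 2 ≤ n → δ n = 0)
    (hone : (1 : A) = δ 0)
    (bA : Module.Basis (Fin (p ^ 2)) k A) (hbA : ∀ i : Fin (p ^ 2), bA i = δ (i : ℕ))
    -- η and η⁻¹ (as computed in Statements 13 and 14)
    (η ηinv : ℕ → A)
    (hη : ∀ n, η n = if n < p then δ n else 0)
    (hηinv : ∀ n, ηinv n = if n < p then ((-1 : k) ^ n) • δ n else 0)
    -- τ̄(δ_n) = Σ_{a+b+c = pn} η⁻¹(δ_a)₁ η(δ_b) ⊗ η⁻¹(δ_a)₂ η(δ_c), using γ(δ_n) = δ_{pn},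
    -- Δ²(δ_{pn}) = Σ_{a+b+c=pn} δ_a ⊗ δ_b ⊗ δ_c, Δ(η⁻¹(δ_a)) = [a<p](−1)^a Σ_{r+s=a} δ_r ⊗ δ_s
    (τ : ℕ → A ⊗[k] A)
    (hτ : ∀ n, τ n =
      ∑ am ∈ Finset.HasAntidiagonal.antidiagonal (p * n), ∑ bc ∈ Finset.HasAntidiagonal.antidiagonal am.2,
        ∑ rs ∈ Finset.HasAntidiagonal.antidiagonal am.1,
          (if am.1 < p then ((-1 : k) ^ am.1) else 0) •
            ((δ rs.1 * η bc.1) ⊗ₜ[k] (δ rs.2 * η bc.2))) :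
    τ 0 = δ 0 ⊗ₜ[k] δ 0 ∧
    τ 1 = ∑ j ∈ Finset.Ico 1 p, δ j ⊗ₜ[k] δ (p - j) ∧
    (∀ n, 2 ≤ n → n < p → τ n = 0) := by
  haveI : Fact p.Prime := ⟨hp⟩
  have hterm : ∀ a r s b c : ℕ, r + s = a →
      (if a < p then ((-1 : k) ^ a) else 0) • ((δ r * η b) ⊗ₜ[k] (δ s * η c))
      = cfdef k p r s b c • (δ (r + b) ⊗ₜ[k] δ (s + c)) := by
    intro a r s b c h
    subst h
    rw [hη, hη]
    simp only [cfdef]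
    split_ifs with h1 h2 h3 <;>
      simp [hmul, TensorProduct.smul_tmul', TensorProduct.tmul_smul, smul_smul, mul_comm,
        mul_left_comm, mul_assoc]
  have hτ' : ∀ n, τ n =
      ∑ am ∈ Finset.HasAntidiagonal.antidiagonal (p * n), ∑ bc ∈ Finset.HasAntidiagonal.antidiagonal am.2,
        ∑ rs ∈ Finset.HasAntidiagonal.antidiagonal am.1,
          cfdef k p rs.1 rs.2 bc.1 bc.2 • (δ (rs.1 + bc.1) ⊗ₜ[k] δ (rs.2 + bc.2)) := by
    intro n
    rw [hτ n]
    refine Finset.sum_congr rfl fun am _ => Finset.sum_congr rfl fun bc _ =>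
      Finset.sum_congr rfl fun rs hrs => hterm am.1 rs.1 rs.2 bc.1 bc.2
        (Finset.HasAntidiagonal.mem_antidiagonal.mp hrs)
  refine ⟨?_, ?_, ?_⟩
  · -- n = 0
    rw [hτ' 0]
    simp [cfdef, hp.pos]
  · -- n = 1
    rw [hτ' 1,
      regroup (p * 1) (fun r s b c => cfdef k p r s b c • (δ (r + b) ⊗ₜ[k] δ (s + c))),
      mul_one, Finset.Nat.sum_antidiagonal_eq_sum_range_succ_mk]
    rw [show (Finset.Ico 1 p) = Finset.Ico 1 p from rfl]
    have hsub : Finset.Ico 1 p ⊆ Finset.range (p + 1) := by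
      intro x hx; simp only [Finset.mem_Ico] at hx; simp only [Finset.mem_range]; omega
    rw [← Finset.sum_subset hsub ?side]
    case side =>
      -- boundary terms i = 0 and i = p vanish
      intro i hi hni
      simp only [Finset.mem_range] at hi
      simp only [Finset.mem_Ico] at hni
      have hi0p : i = 0 ∨ i = p := by omega
      rcases hi0p with h | h
      · -- i = 0
        subst h
        refine Finset.sum_eq_zero fun r hr => Finset.sum_eq_zero fun s hs => ?_
        simp only [Finset.mem_range] at hr hs
        have hr0 : r = 0 := by omega
        subst hr0
        simp only [Nat.sub_zero, Nat.sub_self]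
        rcases Nat.lt_trichotomy s 0 with h | h | h
        · omega
        · subst h
          simp only [cfdef]
          rw [if_neg (by omega : ¬ (p - 0 < p))]
          simp
        · -- 1 ≤ s
          by_cases hsp : s < p
          · have hcp : p ∣ (s + (p - s)).choose s := by
              have hss : s + (p - s) = p := by omega
              rw [hss]
              exact hp.dvd_choose_self (by omega) hsp
            have hz : (((s + (p - s)).choose s : ℕ) : k) = 0 :=
              (CharP.cast_eq_zero_iff k p _).mpr hcp
            simp [cfdef, hz]
          · simp only [cfdef]
            rw [if_neg (by omega : ¬ (0 + s < p))]
            simp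
      · -- i = p
        rw [h]
        refine Finset.sum_eq_zero fun r hr => Finset.sum_eq_zero fun s hs => ?_
        simp only [Finset.mem_range] at hr hs
        have hs0 : s = 0 := by omega
        subst hs0
        simp only [Nat.sub_self, Nat.sub_zero]
        rcases Nat.lt_trichotomy r 0 with h | h | h
        · omega
        · subst h
          simp only [cfdef]
          rw [if_neg (by omega : ¬ (p - 0 < p))]
          simp
        · by_cases hrp : r < p
          · have hcp : p ∣ (r + (p - r)).choose r := by
              have hrr : r + (p - r) = p := by omega
              rw [hrr]
              exact hp.dvd_choose_self (by omega) hrp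
            have hz : (((r + (p - r)).choose r : ℕ) : k) = 0 :=
              (CharP.cast_eq_zero_iff k p _).mpr hcp
            simp [cfdef, hz]
          · simp only [cfdef]
            rw [if_neg (by omega : ¬ (r + 0 < p))]
            simp
    -- middle terms
    refine Finset.sum_congr rfl fun i hi => ?_
    simp only [Finset.mem_Ico] at hi
    obtain ⟨hi1, hip⟩ := hi
    -- rewrite each term
    have hmid : ∀ r ∈ Finset.range (i + 1), ∀ s ∈ Finset.range (p - i + 1),
        cfdef k p r s (i - r) (p - i - s) • (δ (r + (i - r)) ⊗ₜ[k] δ (s + (p - i - s)))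
        = ((if r + s < p then (-1 : k) ^ (r + s) else 0) * ((i.choose r : ℕ) : k)
            * (((p - i).choose s : ℕ) : k)) • (δ i ⊗ₜ[k] δ (p - i)) := by
      intro r hr s hs
      simp only [Finset.mem_range] at hr hs
      have e1 : r + (i - r) = i := by omega
      have e2 : s + (p - i - s) = p - i := by omega
      simp only [cfdef, e1, e2]
      rw [if_pos (by omega : i - r < p), if_pos (by omega : p - i - s < p)]
      ring_nf
    rw [Finset.sum_congr rfl fun r hr => Finset.sum_congr rfl fun s hs => hmid r hr s hs]
    -- pull out the tensor
    have : (∑ r ∈ Finset.range (i + 1), ∑ s ∈ Finset.range (p - i + 1),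
        ((if r + s < p then (-1 : k) ^ (r + s) else 0) * ((i.choose r : ℕ) : k)
            * (((p - i).choose s : ℕ) : k)) • (δ i ⊗ₜ[k] δ (p - i)))
        = (∑ r ∈ Finset.range (i + 1), ∑ s ∈ Finset.range (p - i + 1),
          ((if r + s < p then (-1 : k) ^ (r + s) else 0) * ((i.choose r : ℕ) : k)
            * (((p - i).choose s : ℕ) : k))) • (δ i ⊗ₜ[k] δ (p - i)) := by
      rw [Finset.sum_smul]
      exact Finset.sum_congr rfl fun r _ => by rw [Finset.sum_smul]
    rw [this]
    -- compute the scalar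
    have hscal : (∑ r ∈ Finset.range (i + 1), ∑ s ∈ Finset.range (p - i + 1),
          ((if r + s < p then (-1 : k) ^ (r + s) else 0) * ((i.choose r : ℕ) : k)
            * (((p - i).choose s : ℕ) : k))) = 1 := by
      have hsplit : ∀ r ∈ Finset.range (i + 1), ∀ s ∈ Finset.range (p - i + 1),
          ((if r + s < p then (-1 : k) ^ (r + s) else 0) * ((i.choose r : ℕ) : k)
            * (((p - i).choose s : ℕ) : k))
          = ((-1 : k) ^ r * (i.choose r : k)) * ((-1 : k) ^ s * ((p - i).choose s : k))
            - (if r = i ∧ s = p - i then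
                ((-1 : k) ^ (r + s) * (i.choose r : k) * ((p - i).choose s : k)) else 0) := by
        intro r hr s hs
        simp only [Finset.mem_range] at hr hs
        by_cases h : r + s < p
        · rw [if_pos h, if_neg (by omega : ¬ (r = i ∧ s = p - i))]
          ring
        · have : r = i ∧ s = p - i := by omega
          rw [if_neg h, if_pos this]
          ring
      rw [Finset.sum_congr rfl fun r hr => Finset.sum_congr rfl fun s hs => hsplit r hr s hs]
      simp only [Finset.sum_sub_distrib]
      have hX : (∑ r ∈ Finset.range (i + 1), ∑ s ∈ Finset.range (p - i + 1),
          ((-1 : k) ^ r * (i.choose r : k)) * ((-1 : k) ^ s * ((p - i).choose s : k))) = 0 := by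
        rw [← Finset.sum_mul_sum, altsum (by omega : i ≠ 0), zero_mul]
      have hY : (∑ r ∈ Finset.range (i + 1), ∑ s ∈ Finset.range (p - i + 1),
          (if r = i ∧ s = p - i then
            ((-1 : k) ^ (r + s) * (i.choose r : k) * ((p - i).choose s : k)) else 0))
          = (-1 : k) ^ p := by
        rw [Finset.sum_eq_single_of_mem i (Finset.self_mem_range_succ i) ?zz]
        case zz =>
          intro b hb hbne
          exact Finset.sum_eq_zero fun s hs => if_neg (fun hh => hbne hh.1)
        have hsimp : ∀ s, (if i = i ∧ s = p - i then
            ((-1 : k) ^ (i + s) * (i.choose i : k) * ((p - i).choose s : k)) else 0)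
            = (if s = p - i then
            ((-1 : k) ^ (i + s) * (i.choose i : k) * ((p - i).choose s : k)) else 0) := by
          intro s
          by_cases hh : s = p - i
          · rw [if_pos ⟨rfl, hh⟩, if_pos hh]
          · rw [if_neg (fun hc => hh hc.2), if_neg hh]
        rw [Finset.sum_congr rfl fun s _ => hsimp s,
          Finset.sum_ite_eq' (Finset.range (p - i + 1)) (p - i)]
        rw [if_pos (Finset.self_mem_range_succ (p - i))]
        have hip2 : i + (p - i) = p := by omega
        rw [hip2, Nat.choose_self, Nat.choose_self]
        simp
      rw [hX, hY, neg_one_pow_char k p]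
      simp
    rw [hscal, one_smul]
  · -- n ≥ 2
    intro n hn2 hnp
    rw [hτ' n]
    refine Finset.sum_eq_zero fun am ham => Finset.sum_eq_zero fun bc hbc =>
      Finset.sum_eq_zero fun rs hrs => ?_
    rw [Finset.HasAntidiagonal.mem_antidiagonal] at ham hbc hrs
    by_cases hA : rs.1 + rs.2 < p
    · by_cases hB : bc.1 < p
      · by_cases hC : bc.2 < p
        · have hpn : 2 * p ≤ p * n := by
            calc 2 * p = p * 2 := by ring
            _ ≤ p * n := Nat.mul_le_mul_left p hn2
          have hor : p ≤ rs.1 + bc.1 ∨ p ≤ rs.2 + bc.2 := by omega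
          rcases hor with hor | hor
          · have hd : p ∣ (rs.1 + bc.1).choose rs.1 :=
              hp.dvd_choose (by omega) (by omega) hor
            have hz : (((rs.1 + bc.1).choose rs.1 : ℕ) : k) = 0 :=
              (CharP.cast_eq_zero_iff k p _).mpr hd
            simp [cfdef, hz]
          · have hd : p ∣ (rs.2 + bc.2).choose rs.2 :=
              hp.dvd_choose (by omega) (by omega) hor
            have hz : (((rs.2 + bc.2).choose rs.2 : ℕ) : k) = 0 :=
              (CharP.cast_eq_zero_iff k p _).mpr hd
            simp [cfdef, hz]
        · simp [cfdef, hC]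
      · simp [cfdef, hB]
    · simp [cfdef, hA]
end

section
/- In characteristic p > 0, the element R_λ := Σ_{i=0}^{p−1} (λ^i / i!) t^i ⊗ t^i in (k[t]/(t^p)) ⊗ (k[t]/(t^p)) (with t primitive) satisfies the R-matrix axioms for the commutative cocommutative Hopf algebra k[t]/(t^p): (Δ ⊗ id)(R_λ) = R_λ,13 R_λ,23 and (id ⊗ Δ)(R_λ) = R_λ,13 R_λ,12, and R_λ is invertible with inverse R_{−λ}. -/
open TensorProduct Finset

lemma fact_ne_zero {k : Type*} [Field k] {p : ℕ} (hp : p.Prime) [CharP k p]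
    {n : ℕ} (h : n < p) : (n.factorial : k) ≠ 0 := by
  rw [Ne, CharP.cast_eq_zero_iff k p, hp.dvd_factorial]
  omega

lemma coeff_split {k : Type*} [Field k] {p : ℕ} (hp : p.Prime) [CharP k p]
    (a b : k) {i j : ℕ} (h : i + j < p) :
    (a ^ i * (i.factorial : k)⁻¹) * (b ^ j * (j.factorial : k)⁻¹)
      = ((i + j).choose i : k) * (a ^ i * b ^ j) * (((i + j).factorial : k)⁻¹) := by
  have hi : (i.factorial : k) ≠ 0 := fact_ne_zero hp (by omega)
  have hj : (j.factorial : k) ≠ 0 := fact_ne_zero hp (by omega)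
  have hn : (((i + j).factorial : k)) ≠ 0 := fact_ne_zero hp h
  have key : ((i + j).choose i * i.factorial * j.factorial : ℕ) = (i + j).factorial := by
    have := Nat.choose_mul_factorial_mul_factorial (Nat.le_add_right i j)
    simpa using this
  have keyk : ((i + j).choose i : k) * (i.factorial : k) * (j.factorial : k)
      = ((i + j).factorial : k) := by exact_mod_cast congrArg (Nat.cast : ℕ → k) key
  field_simp
  linear_combination (-(a ^ i * b ^ j)) * keyk

lemma triangle_sum {M : Type*} [AddCommMonoid M] (p : ℕ) (f : ℕ → ℕ → M)
    (hf : ∀ i j, i < p → j < p → p ≤ i + j → f i j = 0) :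
    ∑ n ∈ range p, ∑ m ∈ range (n + 1), f m (n - m)
      = ∑ i ∈ range p, ∑ j ∈ range p, f i j := by
  classical
  rw [← Finset.sum_product' (range p) (range p) f,
    ← Finset.sum_filter_add_sum_filter_not ((range p) ×ˢ (range p))
      (fun q => q.1 + q.2 < p) (fun q => f q.1 q.2)]
  have h2 : ∑ q ∈ ((range p) ×ˢ (range p)).filter (fun q => ¬ q.1 + q.2 < p),
      f q.1 q.2 = 0 := by
    refine Finset.sum_eq_zero fun q hq => ?_
    simp only [Finset.mem_filter, Finset.mem_product, Finset.mem_range] at hq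
    exact hf q.1 q.2 hq.1.1 hq.1.2 (by omega)
  rw [h2, add_zero, Finset.sum_sigma' (range p) (fun n => range (n + 1))
    (fun n m => f m (n - m))]
  refine Finset.sum_nbij' (fun x => (x.2, x.1 - x.2)) (fun q => ⟨q.1 + q.2, q.1⟩)
    ?_ ?_ ?_ ?_ ?_
  · rintro ⟨n, m⟩ hx
    simp only [Finset.mem_sigma, Finset.mem_range] at hx
    simp only [Finset.mem_filter, Finset.mem_product, Finset.mem_range]
    omega
  · rintro ⟨i, j⟩ hq
    simp only [Finset.mem_filter, Finset.mem_product, Finset.mem_range] at hq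
    simp only [Finset.mem_sigma, Finset.mem_range]
    omega
  · rintro ⟨n, m⟩ hx
    simp only [Finset.mem_sigma, Finset.mem_range] at hx
    have h3 : m + (n - m) = n := by omega
    simp [h3]
  · rintro ⟨i, j⟩ hq
    simp only [Finset.mem_filter, Finset.mem_product, Finset.mem_range] at hq
    have h3 : i + j - i = j := by omega
    simp [h3]
  · rintro ⟨n, m⟩ hx
    rfl

lemma comul_t_pow {k : Type*} [CommSemiring k] {A : Type*} [CommRing A] [HopfAlgebra k A]
    (t : A) (hΔt : Coalgebra.comul (R := k) t = t ⊗ₜ[k] (1 : A) + (1 : A) ⊗ₜ[k] t) (n : ℕ) :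
    Coalgebra.comul (R := k) (t ^ n)
      = ∑ m ∈ range (n + 1), (n.choose m) • ((t ^ m) ⊗ₜ[k] (t ^ (n - m))) := by
  have h1 : Coalgebra.comul (R := k) (t ^ n) = (Bialgebra.comulAlgHom k A) (t ^ n) := rfl
  rw [h1, map_pow, Bialgebra.comulAlgHom_apply, hΔt, add_pow]
  refine Finset.sum_congr rfl fun m hm => ?_
  rw [Algebra.TensorProduct.tmul_pow, Algebra.TensorProduct.tmul_pow,
    Algebra.TensorProduct.tmul_mul_tmul, one_pow, one_pow, mul_one, one_mul,
    mul_comm, ← nsmul_eq_mul]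

theorem stmt17 {k : Type*} [Field k] {p : ℕ} (hp : p.Prime) [CharP k p]
    -- A = k[t]/(t^p), a commutative (and cocommutative) Hopf algebra with t primitive
    {A : Type*} [CommRing A] [HopfAlgebra k A]
    (t : A) (ht : t ^ p = 0)
    (hΔt : Coalgebra.comul (R := k) t = t ⊗ₜ[k] (1 : A) + (1 : A) ⊗ₜ[k] t)
    (hεt : Coalgebra.counit (R := k) t = 0)
    (hSt : HopfAlgebra.antipode (R := k) t = -t)
    (bA : Module.Basis (Fin p) k A) (hbA : ∀ i : Fin p, bA i = t ^ (i : ℕ))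
    (lam : k)
    (R : k → A ⊗[k] A)
    (hR : ∀ l : k, R l =
      ∑ i ∈ Finset.range p, (l ^ i * ((i.factorial : k)⁻¹)) • ((t ^ i) ⊗ₜ[k] (t ^ i))) :
    -- (Δ ⊗ id)(R_λ) = R_{λ,13} R_{λ,23}
    (TensorProduct.map (Coalgebra.comul (R := k)) LinearMap.id) (R lam) =
      (∑ i ∈ Finset.range p, (lam ^ i * ((i.factorial : k)⁻¹)) •
          (((t ^ i) ⊗ₜ[k] (1 : A)) ⊗ₜ[k] (t ^ i))) *
      (∑ i ∈ Finset.range p, (lam ^ i * ((i.factorial : k)⁻¹)) •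
          (((1 : A) ⊗ₜ[k] (t ^ i)) ⊗ₜ[k] (t ^ i))) ∧
    -- (id ⊗ Δ)(R_λ) = R_{λ,13} R_{λ,12}
    (TensorProduct.map LinearMap.id (Coalgebra.comul (R := k))) (R lam) =
      (∑ i ∈ Finset.range p, (lam ^ i * ((i.factorial : k)⁻¹)) •
          ((t ^ i) ⊗ₜ[k] ((1 : A) ⊗ₜ[k] (t ^ i)))) *
      (∑ i ∈ Finset.range p, (lam ^ i * ((i.factorial : k)⁻¹)) •
          ((t ^ i) ⊗ₜ[k] ((t ^ i) ⊗ₜ[k] (1 : A)))) ∧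
    -- invertibility: R_λ · R_{−λ} = 1
    R lam * R (-lam) = 1 ∧ R (-lam) * R lam = 1 := by
  classical
  have htpow : ∀ {i j : ℕ}, p ≤ i + j → t ^ i * t ^ j = 0 := by
    intro i j hij
    have : t ^ i * t ^ j = t ^ p * t ^ (i + j - p) := by
      rw [← pow_add, ← pow_add]; congr 1; omega
    rw [this, ht, zero_mul]
  -- the coefficient identity used everywhere
  have hco : ∀ (a b : k) {n m : ℕ}, n < p → m ≤ n →
      (a ^ m * (m.factorial : k)⁻¹) * (b ^ (n - m) * ((n - m).factorial : k)⁻¹)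
        = (n.choose m : k) * (a ^ m * b ^ (n - m)) * ((n.factorial : k)⁻¹) := by
    intro a b n m hn hm
    have hmn : m + (n - m) = n := by omega
    have hlt : m + (n - m) < p := by omega
    rw [coeff_split hp a b hlt, hmn]
  -- Hexagon 1
  have hex1 : (TensorProduct.map (Coalgebra.comul (R := k)) LinearMap.id) (R lam) =
      (∑ i ∈ Finset.range p, (lam ^ i * ((i.factorial : k)⁻¹)) •
          (((t ^ i) ⊗ₜ[k] (1 : A)) ⊗ₜ[k] (t ^ i))) *
      (∑ i ∈ Finset.range p, (lam ^ i * ((i.factorial : k)⁻¹)) •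
          (((1 : A) ⊗ₜ[k] (t ^ i)) ⊗ₜ[k] (t ^ i))) := by
    have hL : (TensorProduct.map (Coalgebra.comul (R := k)) LinearMap.id) (R lam)
        = ∑ n ∈ Finset.range p, ∑ m ∈ Finset.range (n + 1),
            ((lam ^ m * (m.factorial : k)⁻¹) * (lam ^ (n - m) * ((n - m).factorial : k)⁻¹)) •
              (((t ^ m) ⊗ₜ[k] (t ^ (n - m))) ⊗ₜ[k] (t ^ m * t ^ (n - m))) := by
      rw [hR, map_sum]
      refine Finset.sum_congr rfl fun n hn => ?_
      rw [map_smul, TensorProduct.map_tmul, LinearMap.id_apply, comul_t_pow t hΔt n,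
        TensorProduct.sum_tmul, Finset.smul_sum]
      refine Finset.sum_congr rfl fun m hm => ?_
      simp only [Finset.mem_range] at hn hm
      have hmn : m + (n - m) = n := by omega
      have htt : t ^ m * t ^ (n - m) = t ^ n := by rw [← pow_add, hmn]
      rw [← Nat.cast_smul_eq_nsmul k (n.choose m) ((t ^ m) ⊗ₜ[k] (t ^ (n - m))),
        ← TensorProduct.smul_tmul', smul_smul,
        hco lam lam hn (by omega), htt, ← pow_add, hmn]
      congr 1
      ring
    rw [hL, Finset.sum_mul_sum]
    rw [triangle_sum p (fun i j =>
        ((lam ^ i * (i.factorial : k)⁻¹) * (lam ^ j * (j.factorial : k)⁻¹)) •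
          (((t ^ i) ⊗ₜ[k] (t ^ j)) ⊗ₜ[k] (t ^ i * t ^ j)))
      (by intro i j _ _ hij
          simp only [htpow hij, TensorProduct.tmul_zero, smul_zero])]
    refine Finset.sum_congr rfl fun i _ => Finset.sum_congr rfl fun j _ => ?_
    rw [smul_mul_smul_comm, Algebra.TensorProduct.tmul_mul_tmul,
      Algebra.TensorProduct.tmul_mul_tmul, mul_one, one_mul]
  -- Hexagon 2
  have hex2 : (TensorProduct.map LinearMap.id (Coalgebra.comul (R := k))) (R lam) =
      (∑ i ∈ Finset.range p, (lam ^ i * ((i.factorial : k)⁻¹)) •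
          ((t ^ i) ⊗ₜ[k] ((1 : A) ⊗ₜ[k] (t ^ i)))) *
      (∑ i ∈ Finset.range p, (lam ^ i * ((i.factorial : k)⁻¹)) •
          ((t ^ i) ⊗ₜ[k] ((t ^ i) ⊗ₜ[k] (1 : A)))) := by
    have hL : (TensorProduct.map LinearMap.id (Coalgebra.comul (R := k))) (R lam)
        = ∑ n ∈ Finset.range p, ∑ m ∈ Finset.range (n + 1),
            ((lam ^ (n - m) * ((n - m).factorial : k)⁻¹) * (lam ^ m * (m.factorial : k)⁻¹)) •
              ((t ^ (n - m) * t ^ m) ⊗ₜ[k] ((t ^ m) ⊗ₜ[k] (t ^ (n - m)))) := by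
      rw [hR, map_sum]
      refine Finset.sum_congr rfl fun n hn => ?_
      rw [map_smul, TensorProduct.map_tmul, LinearMap.id_apply, comul_t_pow t hΔt n,
        TensorProduct.tmul_sum, Finset.smul_sum]
      refine Finset.sum_congr rfl fun m hm => ?_
      simp only [Finset.mem_range] at hn hm
      have hmn : m + (n - m) = n := by omega
      have htt : t ^ (n - m) * t ^ m = t ^ n := by rw [← pow_add]; congr 1; omega
      have hco2 : (lam ^ (n - m) * ((n - m).factorial : k)⁻¹) * (lam ^ m * (m.factorial : k)⁻¹)
          = lam ^ n * (n.factorial : k)⁻¹ * ((n.choose m : k)) := by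
        rw [mul_comm (lam ^ (n - m) * ((n - m).factorial : k)⁻¹),
          hco lam lam hn (by omega), ← pow_add, hmn]
        ring
      rw [← Nat.cast_smul_eq_nsmul k (n.choose m) ((t ^ m) ⊗ₜ[k] (t ^ (n - m))),
        TensorProduct.tmul_smul, smul_smul, hco2, htt]
    rw [hL]
    rw [triangle_sum p (fun i j =>
        ((lam ^ j * (j.factorial : k)⁻¹) * (lam ^ i * (i.factorial : k)⁻¹)) •
          ((t ^ j * t ^ i) ⊗ₜ[k] ((t ^ i) ⊗ₜ[k] (t ^ j))))
      (by intro i j _ _ hij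
          simp only [show t ^ j * t ^ i = 0 from mul_comm (t ^ j) (t ^ i) ▸ htpow hij,
            TensorProduct.zero_tmul, smul_zero])]
    rw [Finset.sum_mul_sum, Finset.sum_comm]
    refine Finset.sum_congr rfl fun j _ => Finset.sum_congr rfl fun i _ => ?_
    rw [smul_mul_smul_comm, Algebra.TensorProduct.tmul_mul_tmul,
      Algebra.TensorProduct.tmul_mul_tmul, mul_one, one_mul]
  -- invertibility
  have key : ∀ a : k, R a * R (-a) = 1 := by
    intro a
    rw [hR, hR, Finset.sum_mul_sum]
    have step1 : ∀ i j : ℕ,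
        ((a ^ i * (i.factorial : k)⁻¹) • ((t ^ i) ⊗ₜ[k] (t ^ i))) *
          (((-a) ^ j * (j.factorial : k)⁻¹) • ((t ^ j) ⊗ₜ[k] (t ^ j)))
        = ((a ^ i * (i.factorial : k)⁻¹) * ((-a) ^ j * (j.factorial : k)⁻¹)) •
            ((t ^ i * t ^ j) ⊗ₜ[k] (t ^ i * t ^ j)) := by
      intro i j
      rw [smul_mul_smul_comm, Algebra.TensorProduct.tmul_mul_tmul]
    simp only [step1]
    rw [← triangle_sum p (fun i j =>
        ((a ^ i * (i.factorial : k)⁻¹) * ((-a) ^ j * (j.factorial : k)⁻¹)) •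
          ((t ^ i * t ^ j) ⊗ₜ[k] (t ^ i * t ^ j)))
      (by intro i j _ _ hij
          simp only [htpow hij, TensorProduct.zero_tmul, smul_zero])]
    have hinner : ∀ n ∈ Finset.range p,
        ∑ m ∈ Finset.range (n + 1),
          ((a ^ m * (m.factorial : k)⁻¹) * ((-a) ^ (n - m) * ((n - m).factorial : k)⁻¹)) •
            ((t ^ m * t ^ (n - m)) ⊗ₜ[k] (t ^ m * t ^ (n - m)))
        = ((0 : k) ^ n * (n.factorial : k)⁻¹) • ((t ^ n) ⊗ₜ[k] (t ^ n)) := by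
      intro n hn
      simp only [Finset.mem_range] at hn
      have hstep : ∀ m ∈ Finset.range (n + 1),
          ((a ^ m * (m.factorial : k)⁻¹) * ((-a) ^ (n - m) * ((n - m).factorial : k)⁻¹)) •
            ((t ^ m * t ^ (n - m)) ⊗ₜ[k] (t ^ m * t ^ (n - m)))
          = ((a ^ m * (-a) ^ (n - m) * (n.choose m : k)) * ((n.factorial : k)⁻¹)) •
              ((t ^ n) ⊗ₜ[k] (t ^ n)) := by
        intro m hm
        simp only [Finset.mem_range] at hm
        have htt : t ^ m * t ^ (n - m) = t ^ n := by
          rw [← pow_add]; congr 1; omega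
        rw [htt, hco a (-a) hn (by omega)]
        congr 1
        ring
      rw [Finset.sum_congr rfl hstep, ← Finset.sum_smul, ← Finset.sum_mul, ← add_pow,
        add_neg_cancel]
    rw [Finset.sum_congr rfl hinner]
    rw [Finset.sum_eq_single_of_mem 0 (Finset.mem_range.mpr hp.pos)
      (by intro b _ hb
          rw [zero_pow hb, zero_mul, zero_smul])]
    simp [Algebra.TensorProduct.one_def]
  refine ⟨hex1, hex2, key lam, ?_⟩
  rw [mul_comm]
  exact key lam
end
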